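/- arXiv:1206.0327 — 2 statements merged into one kernel-verified Lean document; each statement's English description precedes it below -/
import Mathlib

section
/- Every labeled forest X of length ℓ(X)=l≥1 admits a factorization X = X_1 • X_2 • ⋯ • X_l in which every factor X_i is a labeled forest of length one, and this factorization is unique: if X = X_1•⋯•X_l = X'_1•⋯•X'_l with all X_i and X'_i of length one, then X_i = X'_i for all 1≤i≤l. -/
set_option maxHeartbeats 1000000

/-! # Common definitions: trees, forests, descent algebras -/

/-- Labeled binary trees: leaves carry a natural number (positive in valid forests),
internal nodes carry a label. -/
inductive LTree : Type
  | leaf : ℕ → LTree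
  | node : ℕ → LTree → LTree → LTree
  deriving DecidableEq

instance : Inhabited LTree := ⟨LTree.leaf 1⟩

/-- Unlabeled binary trees with natural number leaves. -/
inductive UTree : Type
  | leaf : ℕ → UTree
  | node : UTree → UTree → UTree
  deriving DecidableEq

instance : Inhabited UTree := ⟨UTree.leaf 1⟩

namespace LTree

/-- The value of a tree: the sum of its leaf entries. -/
def value : LTree → ℕ
  | leaf x => x
  | node _ t1 t2 => t1.value + t2.value

/-- The foliage of a tree: the list of its leaf entries, left to right. -/
def foliage : LTree → List ℕ
  | leaf x => [x]
  | node _ t1 t2 => t1.foliage ++ t2.foliage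

/-- The number of internal nodes. -/
def numNodes : LTree → ℕ
  | leaf _ => 0
  | node _ t1 t2 => t1.numNodes + t2.numNodes + 1

/-- The list of node labels (in preorder). -/
def labels : LTree → List ℕ
  | leaf _ => []
  | node i t1 t2 => i :: (t1.labels ++ t2.labels)

/-- Labels strictly increase downwards, starting above `p`. -/
def incrFrom : ℕ → LTree → Prop
  | _, leaf _ => True
  | p, node i t1 t2 => p < i ∧ incrFrom i t1 ∧ incrFrom i t2

/-- Shift all node labels up by `m`. -/
def shift (m : ℕ) : LTree → LTree
  | leaf x => leaf x
  | node i t1 t2 => node (i + m) (t1.shift m) (t2.shift m)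

/-- Decrease all node labels by one. -/
def dec : LTree → LTree
  | leaf x => leaf x
  | node i t1 t2 => node (i - 1) t1.dec t2.dec

/-- A tree is aligned if at every node the value of the left subtree is
strictly smaller than the value of the right subtree. -/
def Aligned : LTree → Prop
  | leaf _ => True
  | node _ t1 t2 => t1.value < t2.value ∧ t1.Aligned ∧ t2.Aligned

/-- Replace the leaves of a tree (left to right) by the trees from the supplied list;
returns the new tree together with the unused trees. -/
def graft : LTree → List LTree → LTree × List LTree
  | leaf x, [] => (leaf x, [])
  | leaf _, t :: ts => (t, ts)
  | node i t1 t2, ts =>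
    let p1 := t1.graft ts
    let p2 := t2.graft p1.2
    (node i p1.1 p2.1, p2.2)

/-- Find the node with label `i` and return the values of its two subtrees. -/
def findLab (i : ℕ) : LTree → Option (ℕ × ℕ)
  | leaf _ => none
  | node j t1 t2 =>
    if j = i then some (t1.value, t2.value)
    else (t1.findLab i).orElse (fun _ => t2.findLab i)

/-- The label at the root, if the tree is a node. -/
def rootLabel? : LTree → Option ℕ
  | leaf _ => none
  | node i _ _ => some i

/-- The subtree at a position (list of booleans; `false` = left, `true` = right). -/
def subtreeAt : LTree → List Bool → Option LTree
  | t, [] => some t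
  | leaf _, _ :: _ => none
  | node _ t1 t2, b :: p => (if b then t2 else t1).subtreeAt p

/-- Replace the subtree at a position. -/
def replaceAt : LTree → List Bool → LTree → LTree
  | _, [], u => u
  | leaf x, _ :: _, _ => leaf x
  | node i t1 t2, b :: p, u =>
    if b then node i t1 (t2.replaceAt p u) else node i (t1.replaceAt p u) t2

end LTree

namespace UTree

/-- The value of an unlabeled tree. -/
def value : UTree → ℕ
  | leaf x => x
  | node t1 t2 => t1.value + t2.value

/-- The foliage of an unlabeled tree. -/
def foliage : UTree → List ℕ
  | leaf x => [x]
  | node t1 t2 => t1.foliage ++ t2.foliage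

/-- The number of internal nodes. -/
def numNodes : UTree → ℕ
  | leaf _ => 0
  | node t1 t2 => t1.numNodes + t2.numNodes + 1

/-- All leaf entries are positive. -/
def leavesPos : UTree → Prop
  | leaf x => 0 < x
  | node t1 t2 => t1.leavesPos ∧ t2.leavesPos

/-- An unlabeled tree is aligned if at every node the left value is smaller
than the right value. -/
def Aligned : UTree → Prop
  | leaf _ => True
  | node t1 t2 => t1.value < t2.value ∧ t1.Aligned ∧ t2.Aligned

/-- No node has two leaf children bearing the same value. -/
def NoTwin : UTree → Prop
  | leaf _ => True
  | node t1 t2 => t1.NoTwin ∧ t2.NoTwin ∧ ¬ ∃ a, t1 = leaf a ∧ t2 = leaf a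

/-- Graft: replace leaves (left to right) by trees from the supplied list. -/
def graft : UTree → List UTree → UTree × List UTree
  | leaf x, [] => (leaf x, [])
  | leaf _, t :: ts => (t, ts)
  | node t1 t2, ts =>
    let p1 := t1.graft ts
    let p2 := t2.graft p1.2
    (node p1.1 p2.1, p2.2)

/-- The total order on unlabeled trees: compare values, then (reversed) number of
nodes, then recursively the left and right subtrees. -/
def ltt : UTree → UTree → Prop
  | leaf a, leaf b => a < b
  | leaf a, node y1 y2 => a < (node y1 y2).value
  | node x1 x2, leaf b => (node x1 x2).value ≤ b
  | node x1 x2, node y1 y2 =>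
      (node x1 x2).value < (node y1 y2).value ∨
      ((node x1 x2).value = (node y1 y2).value ∧
        ((node y1 y2).numNodes < (node x1 x2).numNodes ∨
          ((node x1 x2).numNodes = (node y1 y2).numNodes ∧
            (ltt x1 y1 ∨ (x1 = y1 ∧ ltt x2 y2)))))

end UTree

/-- Erase the node labels of a labeled tree. -/
def eraseT : LTree → UTree
  | .leaf x => .leaf x
  | .node _ t1 t2 => .node (eraseT t1) (eraseT t2)

/-! ## Labeled forests -/

/-- The squash of a forest: the list of values of its trees. -/
def squash (X : List LTree) : List ℕ := X.map LTree.value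

/-- The foliage of a forest. -/
def forestFoliage (X : List LTree) : List ℕ := X.flatMap LTree.foliage

/-- The length of a forest: its total number of nodes. -/
def forestLen (X : List LTree) : ℕ := (X.map LTree.numNodes).sum

/-- The value of a forest: the sum of the values of its trees. -/
def forestValue (X : List LTree) : ℕ := (X.map LTree.value).sum

/-- All node labels of a forest. -/
def forestLabels (X : List LTree) : List ℕ := X.flatMap LTree.labels

/-- A list of labeled trees is a labeled forest if every node's label exceeds that
of its parent, the labels used are exactly `1, 2, …, l` where `l` is the number
of nodes, and all leaves are positive. -/
def IsLForest (X : List LTree) : Prop :=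
  (∀ t ∈ X, t.incrFrom 0) ∧
  (forestLabels X).Perm (List.range' 1 (forestLen X)) ∧
  ∀ x ∈ forestFoliage X, 0 < x

/-- A forest is aligned if all its trees are. -/
def ForestAligned (X : List LTree) : Prop := ∀ t ∈ X, t.Aligned

/-- Replace the leaves of the forest `X` (left to right) by the trees of `ys`. -/
def graftForest : List LTree → List LTree → List LTree
  | [], _ => []
  | t :: ts, ys =>
    let p := t.graft ys
    p.1 :: graftForest ts p.2

/-- The product `X • Y` of labeled forests: replace the `i`-th leaf of `X` by the
`i`-th tree of `Y`, after shifting all node labels of `Y` up by `ℓ(X)`.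
(Meaningful when the foliage of `X` equals the squash of `Y`.) -/
def bullet (X Y : List LTree) : List LTree :=
  graftForest X (Y.map (LTree.shift (forestLen X)))

/-- The forest of leaves determined by a composition. -/
def leavesOf (c : List ℕ) : List LTree := c.map LTree.leaf

/-- Iterated product `X₁ • (X₂ • (⋯ • Xₗ))` of a list of forests. -/
def chainProd : List (List LTree) → List LTree
  | [] => []
  | [A] => A
  | A :: F => bullet A (chainProd F)

/-- Find the node with label `i` in a forest; return the values of its subtrees. -/
def forestFindLab (i : ℕ) : List LTree → Option (ℕ × ℕ)
  | [] => none
  | t :: r => (t.findLab i).orElse (fun _ => forestFindLab i r)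

/-! ## Unlabeled forests -/

def squashU (X : List UTree) : List ℕ := X.map UTree.value
def foliageU (X : List UTree) : List ℕ := X.flatMap UTree.foliage
def forestLenU (X : List UTree) : ℕ := (X.map UTree.numNodes).sum
def forestValueU (X : List UTree) : ℕ := (X.map UTree.value).sum

/-- An unlabeled forest is valid when all its leaves are positive. -/
def IsUForest (X : List UTree) : Prop := ∀ x ∈ foliageU X, 0 < x

def ForestAlignedU (X : List UTree) : Prop := ∀ t ∈ X, t.Aligned

def graftForestU : List UTree → List UTree → List UTree
  | [], _ => []
  | t :: ts, ys =>
    let p := t.graft ys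
    p.1 :: graftForestU ts p.2

/-- The product of unlabeled forests (no label adjustment needed). -/
def bulletU (X Y : List UTree) : List UTree := graftForestU X Y

/-- Erase all node labels of a labeled forest. -/
def eraseF (X : List LTree) : List UTree := X.map eraseT
/-! ## The difference operator δ and the map Δ -/

/-- Locate the part of the forest whose root is the node labeled `1`; return its
(0-based) index together with the forest obtained by splitting that part into its
two subtrees. -/
def splitAt1 : List LTree → Option (ℕ × List LTree)
  | [] => none
  | LTree.node i t1 t2 :: rest =>
      if i = 1 then some (0, t1 :: t2 :: rest)
      else (splitAt1 rest).map (fun p => (p.1 + 1, LTree.node i t1 t2 :: p.2))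
  | LTree.leaf x :: rest => (splitAt1 rest).map (fun p => (p.1 + 1, LTree.leaf x :: p.2))

/-- Swap the entries in positions `i` and `i+1` (0-based) of a list. -/
def swapAdj {α : Type} : ℕ → List α → List α
  | 0, a :: b :: r => b :: a :: r
  | n + 1, a :: r => a :: swapAdj n r
  | _, l => l

/-- The difference operator `δ` on the span of labeled forests: if `ℓ(X) = 0` then
`δ(X) = X`; otherwise, if the node labeled 1 is the root of the `i`-th part with
subtrees `X₁, X₂`, then `δ(X) = Y − Y.(i,i+1)` where `Y` is obtained by replacing
the `i`-th part by the parts `X₁ X₂` and decreasing all labels by one. -/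
noncomputable def deltaF (k : Type) [Ring k] (X : List LTree) : (List LTree) →₀ k :=
  match splitAt1 X with
  | none => Finsupp.single X 1
  | some (i, Y) =>
      Finsupp.single (Y.map LTree.dec) 1 - Finsupp.single (swapAdj i (Y.map LTree.dec)) 1

/-- The linear extension of `δ`. -/
noncomputable def deltaLin (k : Type) [Ring k] :
    ((List LTree) →₀ k) →ₗ[k] ((List LTree) →₀ k) :=
  (Finsupp.lift ((List LTree) →₀ k) k (List LTree)) (deltaF k)

/-- `Δ(X) = δ^{ℓ(X)}(X)`, recorded as an element of the free associative algebra
with basis the compositions (identifying a forest of length 0 with its foliage). -/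
noncomputable def DeltaComp (k : Type) [Ring k] (X : List LTree) : (List ℕ) →₀ k :=
  Finsupp.mapDomain forestFoliage
    ((fun v => deltaLin k v)^[forestLen X] (Finsupp.single X 1))

/-- The linear map `Δ : kL → kℕ*`. -/
noncomputable def DeltaMap (k : Type) [Ring k] : ((List LTree) →₀ k) →ₗ[k] ((List ℕ) →₀ k) :=
  (Finsupp.lift ((List ℕ) →₀ k) k (List LTree)) (DeltaComp k)

/-! ## Pólya orbit sums and products on the spans -/

/-- The Pólya orbit sum `[X]` of a labeled forest: the sum of all distinct
rearrangements of its parts. -/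
noncomputable def pol (k : Type) [Semiring k] (X : List LTree) : (List LTree) →₀ k :=
  ∑ Y ∈ X.permutations.toFinset, Finsupp.single Y 1

/-- The Pólya orbit sum of an unlabeled forest. -/
noncomputable def polU (k : Type) [Semiring k] (X : List UTree) : (List UTree) →₀ k :=
  ∑ Y ∈ X.permutations.toFinset, Finsupp.single Y 1

/-- The bilinear product on `kL`: `X • Y` when foliage of `X` equals squash of `Y`,
and `0` otherwise. -/
noncomputable def mulL (k : Type) [Semiring k] (f g : (List LTree) →₀ k) : (List LTree) →₀ k :=
  f.sum fun X a => g.sum fun Y b =>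
    if forestFoliage X = squash Y then Finsupp.single (bullet X Y) (a * b) else 0

/-- The bilinear product on `kM` (unlabeled forests). -/
noncomputable def mulM (k : Type) [Semiring k] (f g : (List UTree) →₀ k) : (List UTree) →₀ k :=
  f.sum fun X a => g.sum fun Y b =>
    if foliageU X = squashU Y then Finsupp.single (bulletU X Y) (a * b) else 0

/-- The concatenation product on `kM`. -/
noncomputable def mulCat (k : Type) [Semiring k] (f g : (List UTree) →₀ k) : (List UTree) →₀ k :=
  f.sum fun X a => g.sum fun Y b => Finsupp.single (X ++ Y) (a * b)

/-- The product on the free associative algebra `kℕ*` (concatenation of compositions). -/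
noncomputable def mulComp (k : Type) [Semiring k] (f g : (List ℕ) →₀ k) : (List ℕ) →₀ k :=
  f.sum fun u a => g.sum fun v b => Finsupp.single (u ++ v) (a * b)

/-- The linear map `E : kL → kM` erasing node labels. -/
noncomputable def EL (k : Type) [Semiring k] : ((List LTree) →₀ k) →ₗ[k] ((List UTree) →₀ k) :=
  Finsupp.lmapDomain k k eraseF

/-- `π` on a single unlabeled tree: replace every node by the Lie bracket. -/
noncomputable def piT (k : Type) [Ring k] : UTree → (List ℕ) →₀ k
  | .leaf x => Finsupp.single [x] 1
  | .node t1 t2 => mulComp k (piT k t1) (piT k t2) - mulComp k (piT k t2) (piT k t1)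

/-- `π` on an unlabeled forest: the concatenation product of the images of its parts. -/
noncomputable def piF (k : Type) [Ring k] (X : List UTree) : (List ℕ) →₀ k :=
  (X.map (piT k)).foldr (mulComp k) (Finsupp.single [] 1)

/-- The Pólya action of a permutation of `Fin j` on a list: the entry in position
`i` of the result is the entry in position `σ⁻¹ i` of the input. -/
def permuteL {α : Type} [Inhabited α] {j : ℕ} (σ : Equiv.Perm (Fin j)) (X : List α) :
    List α :=
  List.ofFn fun i => X.getD ((σ⁻¹ i : Fin j) : ℕ) default
/-! ## The quiver Q, its paths, and the map ι -/

/-- The partition obtained by splitting one part `a+b` into parts `a` and `b`. -/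
def applyStep (a b : ℕ) (p : Multiset ℕ) : Multiset ℕ := a ::ₘ b ::ₘ p.erase (a + b)

/-- The vertex reached from `p` after performing the given splitting steps. -/
def sourceAfter (p : Multiset ℕ) (steps : List (ℕ × ℕ)) : Multiset ℕ :=
  steps.foldl (fun q s => applyStep s.1 s.2 q) p

/-- A path in the quiver `Q`, recorded by its destination vertex (a partition,
i.e. a multiset of parts) together with the list of branch symbols `[aᵢ|bᵢ]`
read from the destination towards the source. -/
structure QPath where
  dest : Multiset ℕ
  steps : List (ℕ × ℕ)
  deriving DecidableEq

/-- Each step is applicable in turn. -/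
def SeqOK : Multiset ℕ → List (ℕ × ℕ) → Prop
  | _, [] => True
  | p, s :: rest => s.1 + s.2 ∈ p ∧ SeqOK (applyStep s.1 s.2 p) rest

/-- A valid path of `Q`: positive parts, each step `[a|b]` has `0 < a < b`, and the
steps apply in sequence. -/
def QPath.Valid (P : QPath) : Prop :=
  (∀ x ∈ P.dest, 0 < x) ∧ (∀ s ∈ P.steps, 0 < s.1 ∧ s.1 < s.2) ∧ SeqOK P.dest P.steps

/-- The source vertex of a path. -/
def QPath.source (P : QPath) : Multiset ℕ := sourceAfter P.dest P.steps

/-- The canonical length-one forest attached to the edge with destination `q`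
splitting a part `a + b` into `a` and `b`. -/
noncomputable def edgeForest (a b : ℕ) (q : Multiset ℕ) : List LTree :=
  LTree.node 1 (LTree.leaf a) (LTree.leaf b) :: leavesOf (q.erase (a + b)).toList

/-- `ι` on the path with destination `p` and branch symbols `steps`:
the product (in `kℒ`) of the orbit sums of the edge forests, with the edge nearest
the destination leftmost, times the orbit sum of the source vertex. -/
noncomputable def iotaSteps (k : Type) [Semiring k] :
    Multiset ℕ → List (ℕ × ℕ) → ((List LTree) →₀ k)
  | p, [] => pol k (leavesOf p.toList)
  | p, s :: rest =>
      mulL k (pol k (edgeForest s.1 s.2 p)) (iotaSteps k (applyStep s.1 s.2 p) rest)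

/-- `ι` of a single path. -/
noncomputable def iotaP (k : Type) [Semiring k] (P : QPath) : (List LTree) →₀ k :=
  iotaSteps k P.dest P.steps

/-- The linear extension `ι : kQ → kℒ`. -/
noncomputable def iotaLinM (k : Type) [Semiring k] : (QPath →₀ k) →ₗ[k] ((List LTree) →₀ k) :=
  (Finsupp.lift ((List LTree) →₀ k) k QPath) (iotaP k)

/-! ## The branch monoid and its actions -/

/-- All ways to replace one leaf of value `a+b` in a tree by a node labeled `lab`
with leaves `a` and `b`. -/
def branchActTree (a b lab : ℕ) : LTree → List LTree
  | .leaf x =>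
      if x = a + b then [LTree.node lab (LTree.leaf a) (LTree.leaf b)] else []
  | .node i t1 t2 =>
      (branchActTree a b lab t1).map (fun u => LTree.node i u t2) ++
      (branchActTree a b lab t2).map (fun u => LTree.node i t1 u)

/-- All ways to replace one leaf of value `a+b` in a forest by a node labeled `lab`. -/
def branchWays (a b lab : ℕ) : List LTree → List (List LTree)
  | [] => []
  | t :: rest =>
      (branchActTree a b lab t).map (· :: rest) ++
      (branchWays a b lab rest).map (t :: ·)

/-- The action of the branch symbol `[a|b]` on `kL`. -/
noncomputable def actL1 (k : Type) [Semiring k] (s : ℕ × ℕ) (x : (List LTree) →₀ k) :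
    (List LTree) →₀ k :=
  x.sum fun X a =>
    a • ((branchWays s.1 s.2 (forestLen X + 1) X).map
      (fun Y => Finsupp.single Y (1 : k))).sum

/-- The action of a word of the branch monoid `ℬ*` on `kL`. -/
noncomputable def actLW (k : Type) [Semiring k] (w : List (ℕ × ℕ)) (x : (List LTree) →₀ k) :
    (List LTree) →₀ k :=
  w.foldl (fun y s => actL1 k s y) x

/-- The action of the branch symbol `[a|b]` on `kQ`: prepend an edge at the source
if the source has a part `a + b`, and `0` otherwise. -/
noncomputable def actQ1 (k : Type) [Semiring k] (s : ℕ × ℕ) (x : QPath →₀ k) : QPath →₀ k :=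
  x.sum fun P a =>
    if s.1 + s.2 ∈ P.source then Finsupp.single ⟨P.dest, P.steps ++ [s]⟩ a else 0

/-- The action of a word of `ℬ*` on `kQ`. -/
noncomputable def actQW (k : Type) [Semiring k] (w : List (ℕ × ℕ)) (x : QPath →₀ k) :
    QPath →₀ k :=
  w.foldl (fun y s => actQ1 k s y) x

/-- The path `𝔭(X)` associated to an (aligned) labeled forest `X`: the destination is
the partition of the squash of `X`, and the `i`-th branch symbol records the values of
the two subtrees of the node labeled `i`. -/
noncomputable def pPath (X : List LTree) : QPath :=
  ⟨(squash X : Multiset ℕ),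
    (List.range (forestLen X)).map fun i => (forestFindLab (i + 1) X).getD (0, 0)⟩
/-! ## The equivalence ∼ on labeled forests -/

/-- The subtree of a forest at a position (part index, path in the part). -/
def forestSubtreeAt (X : List LTree) (q : ℕ × List Bool) : Option LTree :=
  if h : q.1 < X.length then (X.get ⟨q.1, h⟩).subtreeAt q.2 else none

/-- Replace the subtree at a position of a forest. -/
def forestReplaceAt (X : List LTree) (q : ℕ × List Bool) (u : LTree) : List LTree :=
  X.set q.1 ((X.getD q.1 default).replaceAt q.2 u)

/-- The label of the parent node of the position `q`, if it exists. -/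
def parentLabel (X : List LTree) (q : ℕ × List Bool) : Option ℕ :=
  if q.2 = [] then none
  else (forestSubtreeAt X (q.1, q.2.dropLast)).bind LTree.rootLabel?

/-- Two positions address disjoint subtrees. -/
def PosDisjoint (q r : ℕ × List Bool) : Prop :=
  q.1 ≠ r.1 ∨ (q.1 = r.1 ∧ ¬ q.2 <+: r.2 ∧ ¬ r.2 <+: q.2)

/-- Move (1): exchange two disjoint non-leaf subtrees `U`, `V` of equal value such that
the labels of the parents of `U` and `V` (where these exist) are smaller than the root
labels of `U` and `V`. -/
def Move1 (X Y : List LTree) : Prop :=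
  ∃ (q r : ℕ × List Bool) (U V : LTree),
    PosDisjoint q r ∧
    forestSubtreeAt X q = some U ∧ forestSubtreeAt X r = some V ∧
    U.rootLabel?.isSome ∧ V.rootLabel?.isSome ∧
    U.value = V.value ∧
    (∀ m, (parentLabel X q = some m ∨ parentLabel X r = some m) →
      ∀ j, (U.rootLabel? = some j ∨ V.rootLabel? = some j) → m < j) ∧
    Y = forestReplaceAt (forestReplaceAt X q V) r U

/-- Exchange the entries in positions `i` and `j` of a list. -/
def swapEntries (X : List LTree) (i j : ℕ) : List LTree :=
  (X.set i (X.getD j default)).set j (X.getD i default)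

/-- Move (2): exchange two parts of a forest. -/
def Move2 (X Y : List LTree) : Prop :=
  ∃ i j, i < j ∧ j < X.length ∧ Y = swapEntries X i j

/-- The equivalence relation `∼` generated by the two kinds of moves. -/
def SimRel : List LTree → List LTree → Prop :=
  Relation.ReflTransGen (fun A B => Move1 A B ∨ Move2 A B)

/-! ## The labeling map F -/

/-- Preorder labeling of an unlabeled tree, starting after label `s`; returns the
labeled tree and the last label used. -/
def labelTreeAux : ℕ → UTree → LTree × ℕ
  | s, .leaf x => (LTree.leaf x, s)
  | s, .node t1 t2 =>
    let p1 := labelTreeAux (s + 1) t1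
    let p2 := labelTreeAux p1.2 t2
    (LTree.node (s + 1) p1.1 p2.1, p2.2)

def labelFAux : ℕ → List UTree → List LTree
  | _, [] => []
  | s, t :: r =>
    let p := labelTreeAux s t
    p.1 :: labelFAux p.2 r

/-- The labeled forest `F(X)`: label the nodes of each part in prefix (preorder)
order, the nodes of each part receiving smaller labels than those of later parts. -/
def labelF (X : List UTree) : List LTree := labelFAux 0 X

/-! ## Compositions from subsets, and alleys -/

/-- The composition of `n` attached to a subset `J ⊆ {1, …, n−1}`: the list of
successive differences of `{0, n} ∪ (S ∖ J)`. -/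
def phi (n : ℕ) (J : Finset ℕ) : List ℕ :=
  let ts := ((Finset.Icc 1 (n - 1)) \ J).sort (· ≤ ·)
  List.zipWith (fun a b => b - a) (0 :: ts) (ts ++ [n])

/-- The start of the maximal block of consecutive points containing `i` linked by
the transpositions in `J` (the transposition `s` links `s` and `s+1`). -/
def bStart (J : Finset ℕ) : ℕ → ℕ
  | 0 => 0
  | 1 => 1
  | i + 2 => if (i + 1) ∈ J then bStart J (i + 1) else i + 2

/-- The end of the maximal block of consecutive points of `{1, …, n}` containing `i`
linked by the transpositions in `J`. -/
def bEnd (J : Finset ℕ) (n : ℕ) (i : ℕ) : ℕ :=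
  if h : i < n ∧ i ∈ J then bEnd J n (i + 1) else i
termination_by n - i
decreasing_by
  have := h.1
  omega

/-- The longest element `w_J` of the parabolic subgroup `W_J ≤ Sₙ`, described
explicitly as the permutation of `{1, …, n}` reversing each maximal block of
consecutive points linked by the transpositions in `J`. -/
def wJpt (n : ℕ) (J : Finset ℕ) (i : ℕ) : ℕ := bStart J i + bEnd J n i - i

/-- The permutation `ω = w_J ⬝ w_{J ∪ {t}}` (as a right action on points). -/
def omegaPt (n : ℕ) (J : Finset ℕ) (t : ℕ) (i : ℕ) : ℕ :=
  wJpt n (insert t J) (wJpt n J i)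

/-- The conjugate `s^ω` of the Coxeter generator `s` by `ω = w_J w_{J∪{t}}`:
the generator whose transposition exchanges the images of `s` and `s+1`. -/
def conjGen (n : ℕ) (J : Finset ℕ) (t : ℕ) (s : ℕ) : ℕ :=
  min (omegaPt n J t s) (omegaPt n J t (s + 1))

/-- An alley `(J; s₁, …, s_l)`. -/
structure Alley where
  J : Finset ℕ
  s : List ℕ
  deriving DecidableEq

/-- A valid alley for `Sₙ`: `J ⊆ S = {1, …, n−1}` and `s₁, …, s_l` are distinct
elements of `J`. -/
def IsAlley (n : ℕ) (a : Alley) : Prop :=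
  a.J ⊆ Finset.Icc 1 (n - 1) ∧ a.s.Nodup ∧ ∀ x ∈ a.s, x ∈ a.J

/-- The action of the Coxeter generator `t` on an alley:
`(J; s₁, …, s_l).t = (J^ω; s₁^ω, …, s_l^ω)` where `ω = w_J w_{J∪{t}}`. -/
def actAlley (n : ℕ) (t : ℕ) (a : Alley) : Alley :=
  ⟨a.J.image (conjGen n a.J t), a.s.map (conjGen n a.J t)⟩

/-- The action of a word of the free monoid `S*` on alleys. -/
def actWordA (n : ℕ) (a : Alley) (w : List ℕ) : Alley :=
  w.foldl (fun b t => actAlley n t b) a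

/-- The defining property of the forest `φ(a)` attached to an alley `a = (J; s₁,…,s_l)`:
it is a labeled forest of length `l` admitting a factorization `X₁ • ⋯ • X_l` into
length-one forests with `s(Xᵢ) = φ(J ∖ {s₁,…,s_{i−1}})` and
`f(Xᵢ) = φ(J ∖ {s₁,…,sᵢ})`; for `l = 0` it is the forest of leaves `φ(J)`. -/
def AlleySpec (n : ℕ) (a : Alley) (X : List LTree) : Prop :=
  IsLForest X ∧ forestLen X = a.s.length ∧
  ∃ F : List (List LTree), F.length = a.s.length ∧
    (∀ A ∈ F, IsLForest A ∧ forestLen A = 1) ∧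
    (∀ (i : ℕ) (h : i < F.length),
      squash (F.get ⟨i, h⟩) = phi n (a.J \ (a.s.take i).toFinset) ∧
      forestFoliage (F.get ⟨i, h⟩) = phi n (a.J \ (a.s.take (i + 1)).toFinset)) ∧
    X = F.foldr bullet (leavesOf (phi n (a.J \ a.s.toFinset)))
/-! ## The descent algebra of the symmetric group -/

/-- `w ∈ X_J`: every descent of `w` (viewing `w` as a permutation of `{1, …, n}`
via `Fin n`) occurs at a position belonging to `J`. -/
def DescAllowed (n : ℕ) (J : Finset ℕ) (w : Equiv.Perm (Fin n)) : Prop :=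
  ∀ i j : Fin n, (i : ℕ) + 1 = (j : ℕ) → w j < w i → ((i : ℕ) + 1) ∈ J

open Classical in
/-- The element `x_J = ∑_{w ∈ X_J} w` of the group algebra of `Sₙ`. -/
noncomputable def xJelt (k : Type) [Semiring k] (n : ℕ) (J : Finset ℕ) :
    MonoidAlgebra k (Equiv.Perm (Fin n)) :=
  ∑ w : Equiv.Perm (Fin n),
    if DescAllowed n J w then MonoidAlgebra.single w 1 else 0

/-- The descent algebra `Σ(Sₙ)` as a submodule (by Solomon's theorem, a subalgebra)
of the group algebra: the span of the `x_J`, `J ⊆ S`. -/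
noncomputable def descentSpan (k : Type) [Semiring k] (n : ℕ) :
    Submodule k (MonoidAlgebra k (Equiv.Perm (Fin n))) :=
  Submodule.span k {x | ∃ J ⊆ Finset.Icc 1 (n - 1), x = xJelt k n J}

/-! ## Spans -/

/-- `kℒₙ`: the span of Pólya orbit sums of labeled forests of value `n`. -/
noncomputable def LspanN (k : Type) [Semiring k] (n : ℕ) :
    Submodule k ((List LTree) →₀ k) :=
  Submodule.span k {y | ∃ X, IsLForest X ∧ forestValue X = n ∧ y = pol k X}

/-- `kℒ`: the span of Pólya orbit sums of labeled forests. -/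
noncomputable def LspanAll (k : Type) [Semiring k] : Submodule k ((List LTree) →₀ k) :=
  Submodule.span k {y | ∃ X, IsLForest X ∧ y = pol k X}

/-- `kℳ`: the span of Pólya orbit sums of unlabeled forests. -/
noncomputable def MspanAll (k : Type) [Semiring k] : Submodule k ((List UTree) →₀ k) :=
  Submodule.span k {y | ∃ X, IsUForest X ∧ y = polU k X}

/-- `kℒ⁺`: the span of Pólya orbit sums of aligned labeled forests. -/
noncomputable def LplusSpan (k : Type) [Semiring k] : Submodule k ((List LTree) →₀ k) :=
  Submodule.span k {y | ∃ X, IsLForest X ∧ ForestAligned X ∧ y = pol k X}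

/-- `kM⁺`: the span of aligned unlabeled forests. -/
noncomputable def MplusSpan (k : Type) [Semiring k] : Submodule k ((List UTree) →₀ k) :=
  Submodule.span k {y | ∃ X, IsUForest X ∧ ForestAlignedU X ∧ y = Finsupp.single X (1 : k)}

/-- The identity element of `kLₙ`: the sum of all compositions of `n`. -/
noncomputable def unitL (k : Type) [Semiring k] (n : ℕ) : (List LTree) →₀ k :=
  ∑ c : Composition n, Finsupp.single (leavesOf c.blocks) 1

/-- `kQₙ`: the span of the valid paths of the quiver `Qₙ` (partitions of `n`). -/
noncomputable def QspanN (k : Type) [Semiring k] (n : ℕ) : Submodule k (QPath →₀ k) :=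
  Submodule.span k
    {y | ∃ P : QPath, P.Valid ∧ P.dest.sum = n ∧ y = Finsupp.single P 1}

/-- The path-algebra product on `kQ`: the concatenation "`P` then `F`" when the
destination of `P` is the source of `F`, and `0` otherwise. -/
noncomputable def mulQ (k : Type) [Semiring k] (f g : QPath →₀ k) : QPath →₀ k :=
  f.sum fun P a => g.sum fun F b =>
    if F.source = P.dest then Finsupp.single ⟨F.dest, F.steps ++ P.steps⟩ (a * b) else 0

/-! ## The ideals 𝒩 and 𝒥 -/

/-- The generators of the ideal `𝒩`: `(U,V) + (V,U)`. -/
def NGens (k : Type) [Semiring k] : Set ((List UTree) →₀ k) :=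
  {g | ∃ U V : UTree, U.leavesPos ∧ V.leavesPos ∧
    g = Finsupp.single [UTree.node U V] 1 + Finsupp.single [UTree.node V U] 1}

/-- The generators of the ideal `𝒥`: the Jacobi sums
`(X,(Y,Z)) + (Y,(Z,X)) + (Z,(X,Y))`. -/
def JGens (k : Type) [Semiring k] : Set ((List UTree) →₀ k) :=
  {g | ∃ X Y Z : UTree, X.leavesPos ∧ Y.leavesPos ∧ Z.leavesPos ∧
    g = Finsupp.single [UTree.node X (UTree.node Y Z)] 1 +
        Finsupp.single [UTree.node Y (UTree.node Z X)] 1 +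
        Finsupp.single [UTree.node Z (UTree.node X Y)] 1}

/-- The two-sided ideal `𝒩 + 𝒥` of `kM` with respect to concatenation. -/
noncomputable def NJideal (k : Type) [Semiring k] : Submodule k ((List UTree) →₀ k) :=
  Submodule.span k {x | ∃ (A B : List UTree) (g : (List UTree) →₀ k),
    (g ∈ NGens k ∨ g ∈ JGens k) ∧
    x = mulCat k (Finsupp.single A (1 : k)) (mulCat k g (Finsupp.single B 1))}

/-! ## Branch relations -/

/-- The two-term branch relation `[a|b][c|d] − [c|d][a|b]`. -/
noncomputable def Rel1 (k : Type) [Ring k] (a b c d : ℕ) : (List (ℕ × ℕ)) →₀ k :=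
  Finsupp.single [(a, b), (c, d)] 1 - Finsupp.single [(c, d), (a, b)] 1

/-- The three-term branch relation
`[a|b][c|d][x|y] + [x|y][a|b][c|d] − [a|b][x|y][c|d] − [c|d][x|y][a|b]`. -/
noncomputable def Rel2 (k : Type) [Ring k] (a b c d x y : ℕ) : (List (ℕ × ℕ)) →₀ k :=
  Finsupp.single [(a, b), (c, d), (x, y)] 1 + Finsupp.single [(x, y), (a, b), (c, d)] 1
  - Finsupp.single [(a, b), (x, y), (c, d)] 1 - Finsupp.single [(c, d), (x, y), (a, b)] 1

/-- The side condition on `a, b, c, d`: positive, `a < b`, `c < d`,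
`a+b ∉ {c,d}` and `c+d ∉ {a,b}`. -/
def Cond1 (a b c d : ℕ) : Prop :=
  0 < a ∧ a < b ∧ 0 < c ∧ c < d ∧ a + b ≠ c ∧ a + b ≠ d ∧ c + d ≠ a ∧ c + d ≠ b

/-- The set `ℛ ⊆ kℬ*` of branch relations. -/
noncomputable def BranchRels (k : Type) [Ring k] : Set ((List (ℕ × ℕ)) →₀ k) :=
  {r | ∃ a b c d, Cond1 a b c d ∧ r = Rel1 k a b c d} ∪
  {r | ∃ a b c d x y, Cond1 a b c d ∧ 0 < x ∧ x < y ∧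
    ((a + b = c + d ∧ (a + b = x ∨ a + b = y)) ∨
      ((x + y = a ∨ x + y = b) ∧ (x + y = c ∨ x + y = d))) ∧
    r = Rel2 k a b c d x y}
/-! ### Auxiliary material for unique factorization -/

section UniqueFactorizationAux

namespace UFA

open LTree

/-- Squash a tree to a leaf bearing its value. -/
def sqL (t : LTree) : LTree := .leaf t.value

/-- The first (length-one) factor of a forest. -/
def firstFactor : List LTree → List LTree
  | [] => []
  | .leaf x :: r => .leaf x :: firstFactor r
  | .node i t1 t2 :: r =>
      if i = 1 then .node 1 (.leaf t1.value) (.leaf t2.value) :: r.map sqL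
      else .leaf (t1.value + t2.value) :: firstFactor r

/-- The remaining factor after splitting off the node labeled 1. -/
def restOf : List LTree → List LTree
  | [] => []
  | .leaf x :: r => .leaf x :: restOf r
  | .node i t1 t2 :: r =>
      if i = 1 then t1.dec :: t2.dec :: r.map LTree.dec
      else .node (i - 1) t1.dec t2.dec :: restOf r

/-- The canonical factorization, with fuel. -/
def canF : ℕ → List LTree → List (List LTree)
  | 0, _ => []
  | n + 1, X => firstFactor X :: canF n (restOf X)

@[simp] lemma canF_length (n : ℕ) : ∀ X, (canF n X).length = n := by
  induction n with
  | zero => intro X; rfl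
  | succ n ih => intro X; simp [canF, ih]

/- Basic tree lemmas -/

@[simp] lemma value_shift (m : ℕ) : ∀ t : LTree, (t.shift m).value = t.value
  | .leaf _ => rfl
  | .node i t1 t2 => by simp [LTree.shift, LTree.value, value_shift m t1, value_shift m t2]

@[simp] lemma foliage_shift (m : ℕ) : ∀ t : LTree, (t.shift m).foliage = t.foliage
  | .leaf _ => rfl
  | .node i t1 t2 => by simp [LTree.shift, LTree.foliage, foliage_shift m t1, foliage_shift m t2]

@[simp] lemma numNodes_shift (m : ℕ) : ∀ t : LTree, (t.shift m).numNodes = t.numNodes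
  | .leaf _ => rfl
  | .node i t1 t2 => by simp [LTree.shift, LTree.numNodes, numNodes_shift m t1, numNodes_shift m t2]

lemma labels_shift (m : ℕ) : ∀ t : LTree, (t.shift m).labels = t.labels.map (· + m)
  | .leaf _ => rfl
  | .node i t1 t2 => by simp [LTree.shift, LTree.labels, labels_shift m t1, labels_shift m t2]

@[simp] lemma value_dec : ∀ t : LTree, t.dec.value = t.value
  | .leaf _ => rfl
  | .node i t1 t2 => by simp [LTree.dec, LTree.value, value_dec t1, value_dec t2]

@[simp] lemma foliage_dec : ∀ t : LTree, t.dec.foliage = t.foliage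
  | .leaf _ => rfl
  | .node i t1 t2 => by simp [LTree.dec, LTree.foliage, foliage_dec t1, foliage_dec t2]

@[simp] lemma numNodes_dec : ∀ t : LTree, t.dec.numNodes = t.numNodes
  | .leaf _ => rfl
  | .node i t1 t2 => by simp [LTree.dec, LTree.numNodes, numNodes_dec t1, numNodes_dec t2]

lemma labels_dec : ∀ t : LTree, t.dec.labels = t.labels.map (· - 1)
  | .leaf _ => rfl
  | .node i t1 t2 => by simp [LTree.dec, LTree.labels, labels_dec t1, labels_dec t2]

@[simp] lemma dec_shift_one : ∀ t : LTree, (t.shift 1).dec = t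
  | .leaf _ => rfl
  | .node i t1 t2 => by simp [LTree.shift, LTree.dec, dec_shift_one t1, dec_shift_one t2]

lemma shift_dec_one : ∀ t : LTree, (∀ j ∈ t.labels, 1 ≤ j) → t.dec.shift 1 = t
  | .leaf _, _ => rfl
  | .node i t1 t2, h => by
      have hi : 1 ≤ i := h i (by simp [LTree.labels])
      have h1 := shift_dec_one t1 fun j hj => h j (by simp [LTree.labels, hj])
      have h2 := shift_dec_one t2 fun j hj => h j (by simp [LTree.labels, hj])
      simp [LTree.dec, LTree.shift, h1, h2]
      omega

lemma labels_gt : ∀ (t : LTree) (p : ℕ), t.incrFrom p → ∀ j ∈ t.labels, p < j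
  | .leaf _, _, _, j, hj => by simp [LTree.labels] at hj
  | .node i t1 t2, p, h, j, hj => by
      have h' : p < i ∧ t1.incrFrom i ∧ t2.incrFrom i := h
      simp [LTree.labels] at hj
      rcases hj with rfl | hj | hj
      · exact h'.1
      · exact lt_trans h'.1 (labels_gt t1 i h'.2.1 j hj)
      · exact lt_trans h'.1 (labels_gt t2 i h'.2.2 j hj)

lemma incrFrom_mono : ∀ (t : LTree) (p q : ℕ), q ≤ p → t.incrFrom p → t.incrFrom q
  | .leaf _, _, _, _, _ => trivial
  | .node i t1 t2, p, q, hq, h => by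
      have h' : p < i ∧ t1.incrFrom i ∧ t2.incrFrom i := h
      exact ⟨lt_of_le_of_lt hq h'.1, h'.2.1, h'.2.2⟩

lemma incrFrom_shift (m : ℕ) : ∀ (t : LTree) (p : ℕ), t.incrFrom p → (t.shift m).incrFrom (p + m)
  | .leaf _, _, _ => trivial
  | .node i t1 t2, p, h => by
      have h' : p < i ∧ t1.incrFrom i ∧ t2.incrFrom i := h
      exact ⟨by omega, incrFrom_shift m t1 i h'.2.1, incrFrom_shift m t2 i h'.2.2⟩

lemma incrFrom_dec : ∀ (t : LTree) (p : ℕ), t.incrFrom p → (∀ j ∈ t.labels, 2 ≤ j) →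
    t.dec.incrFrom (p - 1)
  | .leaf _, _, _, _ => trivial
  | .node i t1 t2, p, h, hlab => by
      have h' : p < i ∧ t1.incrFrom i ∧ t2.incrFrom i := h
      have hi : 2 ≤ i := hlab i (by simp [LTree.labels])
      refine ⟨by omega, ?_, ?_⟩
      · exact incrFrom_dec t1 i h'.2.1 fun j hj => hlab j (by simp [LTree.labels, hj])
      · exact incrFrom_dec t2 i h'.2.2 fun j hj => hlab j (by simp [LTree.labels, hj])

lemma value_pos : ∀ t : LTree, (∀ x ∈ t.foliage, 0 < x) → 0 < t.value
  | .leaf x, h => h x (by simp [LTree.foliage])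
  | .node i t1 t2, h => by
      have := value_pos t1 fun x hx => h x (by simp [LTree.foliage, hx])
      simp [LTree.value]; omega

lemma numNodes_eq_zero : ∀ t : LTree, t.numNodes = 0 → ∃ x, t = .leaf x
  | .leaf x, _ => ⟨x, rfl⟩
  | .node i t1 t2, h => by simp [LTree.numNodes] at h

/- Forest-level simp lemmas -/

@[simp] lemma forestLabels_nil : forestLabels [] = [] := rfl
@[simp] lemma forestLabels_cons (t : LTree) (r : List LTree) :
    forestLabels (t :: r) = t.labels ++ forestLabels r := by simp [forestLabels]
@[simp] lemma forestLabels_append (r s : List LTree) :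
    forestLabels (r ++ s) = forestLabels r ++ forestLabels s := by simp [forestLabels]

@[simp] lemma forestFoliage_nil : forestFoliage [] = [] := rfl
@[simp] lemma forestFoliage_cons (t : LTree) (r : List LTree) :
    forestFoliage (t :: r) = t.foliage ++ forestFoliage r := by simp [forestFoliage]
@[simp] lemma forestFoliage_append (r s : List LTree) :
    forestFoliage (r ++ s) = forestFoliage r ++ forestFoliage s := by simp [forestFoliage]

@[simp] lemma squash_nil : squash [] = [] := rfl
@[simp] lemma squash_cons (t : LTree) (r : List LTree) :
    squash (t :: r) = t.value :: squash r := by simp [squash]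
@[simp] lemma squash_append (r s : List LTree) :
    squash (r ++ s) = squash r ++ squash s := by simp [squash]

@[simp] lemma forestLen_nil : forestLen [] = 0 := rfl
@[simp] lemma forestLen_cons (t : LTree) (r : List LTree) :
    forestLen (t :: r) = t.numNodes + forestLen r := by simp [forestLen]
@[simp] lemma forestLen_append (r s : List LTree) :
    forestLen (r ++ s) = forestLen r + forestLen s := by simp [forestLen]

lemma forestLabels_map_dec (L : List LTree) :
    forestLabels (L.map LTree.dec) = (forestLabels L).map (· - 1) := by
  induction L with
  | nil => rfl
  | cons t r ih => simp [labels_dec, ih]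

lemma forestLabels_map_shift (m : ℕ) (L : List LTree) :
    forestLabels (L.map (LTree.shift m)) = (forestLabels L).map (· + m) := by
  induction L with
  | nil => rfl
  | cons t r ih => simp [labels_shift, ih]

lemma forestFoliage_map_dec (L : List LTree) :
    forestFoliage (L.map LTree.dec) = forestFoliage L := by
  induction L with
  | nil => rfl
  | cons t r ih => simp [ih]

lemma forestFoliage_map_shift (m : ℕ) (L : List LTree) :
    forestFoliage (L.map (LTree.shift m)) = forestFoliage L := by
  induction L with
  | nil => rfl
  | cons t r ih => simp [ih]

lemma forestLen_map_dec (L : List LTree) : forestLen (L.map LTree.dec) = forestLen L := by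
  induction L with
  | nil => rfl
  | cons t r ih => simp [ih]

lemma forestLen_map_shift (m : ℕ) (L : List LTree) :
    forestLen (L.map (LTree.shift m)) = forestLen L := by
  induction L with
  | nil => rfl
  | cons t r ih => simp [ih]

@[simp] lemma squash_map_dec (L : List LTree) : squash (L.map LTree.dec) = squash L := by
  induction L with
  | nil => rfl
  | cons t r ih => simp [ih]

@[simp] lemma squash_map_shift (m : ℕ) (L : List LTree) :
    squash (L.map (LTree.shift m)) = squash L := by
  induction L with
  | nil => rfl
  | cons t r ih => simp [ih]

lemma forestLen_eq_zero {L : List LTree} (h : forestLen L = 0) :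
    ∀ t ∈ L, t.numNodes = 0 := by
  induction L with
  | nil => simp
  | cons t r ih =>
      simp only [forestLen_cons] at h
      intro s hs
      rcases List.mem_cons.1 hs with rfl | hs
      · omega
      · exact ih (by omega) s hs

lemma map_sqL_of_leaves {L : List LTree} (h : ∀ t ∈ L, t.numNodes = 0) :
    L.map sqL = L := by
  induction L with
  | nil => rfl
  | cons t r ih =>
      obtain ⟨x, rfl⟩ := numNodes_eq_zero t (h t (by simp))
      simp only [List.map_cons]
      rw [ih fun s hs => h s (by simp [hs])]
      rfl

lemma eq_map_leaf {L : List LTree} (h : ∀ t ∈ L, t.numNodes = 0) :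
    L = (L.map LTree.value).map LTree.leaf := by
  induction L with
  | nil => rfl
  | cons t r ih =>
      obtain ⟨x, rfl⟩ := numNodes_eq_zero t (h t (by simp))
      simp only [List.map_cons]
      rw [← ih fun s hs => h s (by simp [hs])]
      rfl

@[simp] lemma forestFoliage_map_leaf (c : List ℕ) :
    forestFoliage (c.map LTree.leaf) = c := by
  induction c with
  | nil => rfl
  | cons x c ih => simp [LTree.foliage, ih]

@[simp] lemma squash_map_leaf (c : List ℕ) : squash (c.map LTree.leaf) = c := by
  induction c with
  | nil => rfl
  | cons x c ih => simp [LTree.value, ih]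

/- Grafting computations -/

lemma graftForest_leaves : ∀ (c : List ℕ) (v : List LTree), v.length = c.length →
    graftForest (c.map LTree.leaf) v = v
  | [], [], _ => rfl
  | [], _ :: _, h => by simp at h
  | _ :: _, [], h => by simp at h
  | x :: c, y :: v, h => by
      show y :: graftForest (c.map LTree.leaf) v = y :: v
      rw [graftForest_leaves c v (by simpa using h)]

lemma graftForest_formula (i a b : ℕ) :
    ∀ (c1 : List ℕ) (u : List LTree) (c2 : List ℕ) (v : List LTree) (y1 y2 : LTree),
      u.length = c1.length → v.length = c2.length →
      graftForest (c1.map LTree.leaf ++ LTree.node i (.leaf a) (.leaf b) :: c2.map LTree.leaf)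
          (u ++ y1 :: y2 :: v)
        = u ++ LTree.node i y1 y2 :: v
  | [], [], c2, v, y1, y2, _, h2 => by
      show LTree.node i y1 y2 :: graftForest (c2.map LTree.leaf) v = _
      rw [graftForest_leaves c2 v h2]
      rfl
  | [], _ :: _, _, _, _, _, h1, _ => by simp at h1
  | _ :: _, [], _, _, _, _, h1, _ => by simp at h1
  | x :: c1, w :: u, c2, v, y1, y2, h1, h2 => by
      show w :: graftForest (c1.map LTree.leaf ++ _ :: c2.map LTree.leaf) (u ++ y1 :: y2 :: v)
          = _
      rw [graftForest_formula i a b c1 u c2 v y1 y2 (by simpa using h1) h2]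
      rfl

/- Computed forms of firstFactor and restOf -/

lemma firstFactor_eq : ∀ (X1 : List LTree) (t1 t2 : LTree) (X2 : List LTree),
    (∀ t ∈ X1, 1 ∉ t.labels) →
    firstFactor (X1 ++ .node 1 t1 t2 :: X2)
      = X1.map sqL ++ .node 1 (.leaf t1.value) (.leaf t2.value) :: X2.map sqL
  | [], t1, t2, X2, _ => by simp [firstFactor]
  | .leaf x :: X1, t1, t2, X2, h => by
      simp only [List.cons_append, firstFactor, List.map_cons]
      rw [firstFactor_eq X1 t1 t2 X2 fun t ht => h t (List.mem_cons_of_mem _ ht)]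
      rfl
  | .node i s1 s2 :: X1, t1, t2, X2, h => by
      have hi : ¬ (i = 1) := by
        intro e
        exact (h _ List.mem_cons_self) (by simp [LTree.labels, e])
      simp only [List.cons_append, firstFactor, if_neg hi, List.map_cons]
      rw [firstFactor_eq X1 t1 t2 X2 fun t ht => h t (List.mem_cons_of_mem _ ht)]
      rfl

lemma restOf_eq : ∀ (X1 : List LTree) (t1 t2 : LTree) (X2 : List LTree),
    (∀ t ∈ X1, 1 ∉ t.labels) →
    restOf (X1 ++ .node 1 t1 t2 :: X2)
      = X1.map LTree.dec ++ t1.dec :: t2.dec :: X2.map LTree.dec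
  | [], t1, t2, X2, _ => by simp [restOf]
  | .leaf x :: X1, t1, t2, X2, h => by
      simp only [List.cons_append, restOf, List.map_cons]
      rw [restOf_eq X1 t1 t2 X2 fun t ht => h t (List.mem_cons_of_mem _ ht)]
      rfl
  | .node i s1 s2 :: X1, t1, t2, X2, h => by
      have hi : ¬ (i = 1) := by
        intro e
        exact (h _ List.mem_cons_self) (by simp [LTree.labels, e])
      simp only [List.cons_append, restOf, if_neg hi, List.map_cons]
      rw [restOf_eq X1 t1 t2 X2 fun t ht => h t (List.mem_cons_of_mem _ ht)]
      rfl

/- Locating the node labeled 1 -/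

lemma root_one : ∀ t : LTree, t.incrFrom 0 → 1 ∈ t.labels → ∃ t1 t2, t = .node 1 t1 t2
  | .leaf _, _, hm => by simp [LTree.labels] at hm
  | .node i t1 t2, h, hm => by
      have h' : 0 < i ∧ t1.incrFrom i ∧ t2.incrFrom i := h
      simp only [LTree.labels, List.mem_cons, List.mem_append] at hm
      rcases hm with hm | hm | hm
      · exact ⟨t1, t2, by rw [hm]⟩
      · have := labels_gt t1 i h'.2.1 1 hm; omega
      · have := labels_gt t2 i h'.2.2 1 hm; omega

lemma exists_split : ∀ X : List LTree, (∀ t ∈ X, t.incrFrom 0) → 1 ∈ forestLabels X →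
    ∃ X1 t1 t2 X2, X = X1 ++ .node 1 t1 t2 :: X2 ∧ ∀ t ∈ X1, 1 ∉ t.labels
  | [], _, hm => by simp at hm
  | t :: X, hinc, hm => by
      by_cases h1 : 1 ∈ t.labels
      · obtain ⟨t1, t2, rfl⟩ := root_one t (hinc t (by simp)) h1
        exact ⟨[], t1, t2, X, rfl, by simp⟩
      · have hm' : 1 ∈ forestLabels X := by
          simp only [forestLabels_cons, List.mem_append] at hm
          tauto
        obtain ⟨X1, t1, t2, X2, he, hn⟩ :=
          exists_split X (fun s hs => hinc s (by simp [hs])) hm'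
        refine ⟨t :: X1, t1, t2, X2, by simp [he], ?_⟩
        intro s hs
        rcases List.mem_cons.1 hs with rfl | hs
        · exact h1
        · exact hn s hs

/- range' arithmetic -/

lemma range'_map_sub : ∀ (n s : ℕ), (List.range' (s + 1) n).map (· - 1) = List.range' s n
  | 0, _ => rfl
  | n + 1, s => by
      rw [List.range'_succ, List.range'_succ, List.map_cons, range'_map_sub n (s + 1)]
      simp

lemma range'_map_add : ∀ (n s : ℕ), (List.range' s n).map (· + 1) = List.range' (s + 1) n
  | 0, _ => rfl
  | n + 1, s => by
      rw [List.range'_succ, List.range'_succ, List.map_cons, range'_map_add n (s + 1)]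

lemma count_labels_one {X : List LTree} {l : ℕ}
    (hperm : (forestLabels X).Perm (List.range' 1 l)) (hl : 1 ≤ l) :
    (forestLabels X).count 1 = 1 := by
  rw [hperm.count_eq]
  have hnd : (List.range' 1 l).Nodup := List.nodup_range'
  have h1 : 1 ∈ List.range' 1 l := by rw [List.mem_range'_1]; omega
  exact List.count_eq_one_of_mem hnd h1

/- More helper lemmas -/

lemma mem_forestFoliage {L : List LTree} {t : LTree} (ht : t ∈ L) {x : ℕ}
    (hx : x ∈ t.foliage) : x ∈ forestFoliage L :=
  List.mem_flatMap.2 ⟨t, ht, hx⟩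

lemma forestLabels_map_sqL (L : List LTree) : forestLabels (L.map sqL) = [] := by
  induction L with
  | nil => rfl
  | cons t r ih => simp [sqL, LTree.labels, ih]

lemma forestLen_map_sqL (L : List LTree) : forestLen (L.map sqL) = 0 := by
  induction L with
  | nil => rfl
  | cons t r ih => simp [sqL, LTree.numNodes, ih]

lemma forestFoliage_map_sqL (L : List LTree) :
    forestFoliage (L.map sqL) = squash L := by
  induction L with
  | nil => rfl
  | cons t r ih => simp [sqL, LTree.foliage, ih]

lemma squash_map_sqL (L : List LTree) : squash (L.map sqL) = squash L := by
  induction L with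
  | nil => rfl
  | cons t r ih => simp [sqL, LTree.value, ih]

lemma map_sqL_eq (L : List LTree) : L.map sqL = (L.map LTree.value).map LTree.leaf := by
  induction L with
  | nil => rfl
  | cons t r ih => simp [sqL, ih]

lemma map_shift_dec {L : List LTree} (h : ∀ t ∈ L, ∀ j ∈ t.labels, 1 ≤ j) :
    (L.map LTree.dec).map (LTree.shift 1) = L := by
  induction L with
  | nil => rfl
  | cons t r ih =>
      simp only [List.map_cons]
      rw [shift_dec_one t (h t (by simp)), ih fun s hs => h s (by simp [hs])]

lemma map_dec_shift (L : List LTree) : (L.map (LTree.shift 1)).map LTree.dec = L := by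
  induction L with
  | nil => rfl
  | cons t r ih => simp only [List.map_cons]; rw [dec_shift_one, ih]

/- The main splitting lemma -/

lemma split_props (X : List LTree) (hX : IsLForest X) (hl : 1 ≤ forestLen X) :
    IsLForest (firstFactor X) ∧ forestLen (firstFactor X) = 1 ∧
    IsLForest (restOf X) ∧ forestLen (restOf X) = forestLen X - 1 ∧
    forestFoliage (firstFactor X) = squash (restOf X) ∧
    squash (firstFactor X) = squash X ∧
    X = bullet (firstFactor X) (restOf X) := by
  obtain ⟨hinc, hperm, hfol⟩ := hX
  have hmem : 1 ∈ forestLabels X := hperm.mem_iff.2 (by rw [List.mem_range'_1]; omega)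
  obtain ⟨X1, t1, t2, X2, rfl, h1⟩ := exists_split X hinc hmem
  -- basic incrFrom facts
  have hincX1 : ∀ t ∈ X1, t.incrFrom 0 := fun t ht => hinc t (by simp [ht])
  have hincX2 : ∀ t ∈ X2, t.incrFrom 0 := fun t ht => hinc t (by simp [ht])
  have hnode : 0 < 1 ∧ t1.incrFrom 1 ∧ t2.incrFrom 1 := hinc (.node 1 t1 t2) (by simp)
  -- counting the label 1
  have hcnt := count_labels_one hperm hl
  simp only [forestLabels_append, forestLabels_cons, LTree.labels, List.count_append,
    List.count_cons] at hcnt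
  norm_num at hcnt
  have hX2lab : ∀ t ∈ X2, 1 ∉ t.labels := by
    intro t ht e
    have hm : 1 ∈ forestLabels X2 := List.mem_flatMap.2 ⟨t, ht, e⟩
    have : (forestLabels X2).count 1 = 0 := by omega
    exact (List.count_eq_zero.mp this) hm
  -- label lower bounds
  have hge1X1 : ∀ t ∈ X1, ∀ j ∈ t.labels, 1 ≤ j := fun t ht j hj =>
    labels_gt t 0 (hincX1 t ht) j hj
  have hge1X2 : ∀ t ∈ X2, ∀ j ∈ t.labels, 1 ≤ j := fun t ht j hj =>
    labels_gt t 0 (hincX2 t ht) j hj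
  have hge2X1 : ∀ t ∈ X1, ∀ j ∈ t.labels, 2 ≤ j := by
    intro t ht j hj
    have := hge1X1 t ht j hj
    have : j ≠ 1 := fun e => (h1 t ht) (e ▸ hj)
    omega
  have hge2X2 : ∀ t ∈ X2, ∀ j ∈ t.labels, 2 ≤ j := by
    intro t ht j hj
    have := hge1X2 t ht j hj
    have : j ≠ 1 := fun e => (hX2lab t ht) (e ▸ hj)
    omega
  have hge2t1 : ∀ j ∈ t1.labels, 2 ≤ j := fun j hj => by
    have := labels_gt t1 1 hnode.2.1 j hj; omega
  have hge2t2 : ∀ j ∈ t2.labels, 2 ≤ j := fun j hj => by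
    have := labels_gt t2 1 hnode.2.2 j hj; omega
  have hge1t1 : ∀ j ∈ t1.labels, 1 ≤ j := fun j hj => by have := hge2t1 j hj; omega
  have hge1t2 : ∀ j ∈ t2.labels, 1 ≤ j := fun j hj => by have := hge2t2 j hj; omega
  -- computed forms
  have hff := firstFactor_eq X1 t1 t2 X2 h1
  have hro := restOf_eq X1 t1 t2 X2 h1
  -- foliage positivity data
  have hposfol : ∀ t ∈ X1 ++ LTree.node 1 t1 t2 :: X2, ∀ x ∈ t.foliage, 0 < x :=
    fun t ht x hx => hfol x (mem_forestFoliage ht hx)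
  have ht1pos : 0 < t1.value := value_pos t1 fun x hx =>
    hposfol (.node 1 t1 t2) (by simp) x (by simp [LTree.foliage, hx])
  have ht2pos : 0 < t2.value := value_pos t2 fun x hx =>
    hposfol (.node 1 t1 t2) (by simp) x (by simp [LTree.foliage, hx])
  -- lengths
  have hfflen : forestLen (firstFactor (X1 ++ LTree.node 1 t1 t2 :: X2)) = 1 := by
    rw [hff]; simp [forestLen_map_sqL, LTree.numNodes]
  have hrolen : forestLen (restOf (X1 ++ LTree.node 1 t1 t2 :: X2))
      = forestLen (X1 ++ LTree.node 1 t1 t2 :: X2) - 1 := by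
    rw [hro]; simp [forestLen_map_dec, LTree.numNodes]; omega
  -- IsLForest (firstFactor X)
  have hffF : IsLForest (firstFactor (X1 ++ LTree.node 1 t1 t2 :: X2)) := by
    refine ⟨?_, ?_, ?_⟩
    · intro t ht
      rw [hff] at ht
      rcases List.mem_append.1 ht with ht | ht
      · obtain ⟨s, _, rfl⟩ := List.mem_map.1 ht
        exact trivial
      · rcases List.mem_cons.1 ht with rfl | ht
        · exact ⟨Nat.one_pos, trivial, trivial⟩
        · obtain ⟨s, _, rfl⟩ := List.mem_map.1 ht
          exact trivial
    · rw [hfflen, hff]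
      simp [forestLabels_map_sqL, LTree.labels, List.range'_one]
    · have hffFol : forestFoliage (firstFactor (X1 ++ LTree.node 1 t1 t2 :: X2))
          = X1.map LTree.value ++ t1.value :: t2.value :: X2.map LTree.value := by
        rw [hff]
        simp [forestFoliage_map_sqL, LTree.foliage, squash]
      intro x hx
      rw [hffFol] at hx
      rcases List.mem_append.1 hx with hx | hx
      · obtain ⟨s, hs, rfl⟩ := List.mem_map.1 hx
        exact value_pos s (hposfol s (by simp [hs]))
      · rcases List.mem_cons.1 hx with rfl | hx
        · exact ht1pos
        rcases List.mem_cons.1 hx with rfl | hx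
        · exact ht2pos
        obtain ⟨s, hs, rfl⟩ := List.mem_map.1 hx
        exact value_pos s (hposfol s (by simp [hs]))
  -- IsLForest (restOf X)
  have hroF : IsLForest (restOf (X1 ++ LTree.node 1 t1 t2 :: X2)) := by
    refine ⟨?_, ?_, ?_⟩
    · intro t ht
      rw [hro] at ht
      rcases List.mem_append.1 ht with ht | ht
      · obtain ⟨s, hs, rfl⟩ := List.mem_map.1 ht
        have := incrFrom_dec s 0 (hincX1 s hs) (hge2X1 s hs)
        simpa using this
      · rcases List.mem_cons.1 ht with rfl | ht
        · have := incrFrom_dec t1 1 hnode.2.1 hge2t1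
          simpa using this
        rcases List.mem_cons.1 ht with rfl | ht
        · have := incrFrom_dec t2 1 hnode.2.2 hge2t2
          simpa using this
        · obtain ⟨s, hs, rfl⟩ := List.mem_map.1 ht
          have := incrFrom_dec s 0 (hincX2 s hs) (hge2X2 s hs)
          simpa using this
    · rw [hrolen]
      have hp1 : (1 :: (forestLabels X1 ++ ((t1.labels ++ t2.labels) ++ forestLabels X2))).Perm
          (List.range' 1 (forestLen (X1 ++ LTree.node 1 t1 t2 :: X2))) := by
        refine List.perm_middle.symm.trans ?_
        refine List.Perm.trans (List.Perm.of_eq ?_) hperm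
        simp [LTree.labels]
      have hl1 : forestLen (X1 ++ LTree.node 1 t1 t2 :: X2)
          = (forestLen (X1 ++ LTree.node 1 t1 t2 :: X2) - 1) + 1 := by omega
      rw [hl1, List.range'_succ] at hp1
      have hp2 := hp1.cons_inv
      have hp3 := hp2.map (· - 1)
      rw [range'_map_sub] at hp3
      rw [hro]
      refine List.Perm.trans (List.Perm.of_eq ?_) hp3
      simp [forestLabels_map_dec, labels_dec, List.map_append]
    · have heq : forestFoliage (restOf (X1 ++ LTree.node 1 t1 t2 :: X2))
          = forestFoliage (X1 ++ LTree.node 1 t1 t2 :: X2) := by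
        rw [hro]; simp [forestFoliage_map_dec, LTree.foliage]
      rw [heq]; exact hfol
  -- foliage of firstFactor equals squash of restOf
  have hfsq : forestFoliage (firstFactor (X1 ++ LTree.node 1 t1 t2 :: X2))
      = squash (restOf (X1 ++ LTree.node 1 t1 t2 :: X2)) := by
    rw [hff, hro]
    simp [forestFoliage_map_sqL, LTree.foliage]
  -- squash of firstFactor equals squash of X
  have hsq : squash (firstFactor (X1 ++ LTree.node 1 t1 t2 :: X2))
      = squash (X1 ++ LTree.node 1 t1 t2 :: X2) := by
    rw [hff]
    simp [squash_map_sqL, LTree.value]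
  -- the product identity
  have hbul : X1 ++ LTree.node 1 t1 t2 :: X2
      = bullet (firstFactor (X1 ++ LTree.node 1 t1 t2 :: X2))
          (restOf (X1 ++ LTree.node 1 t1 t2 :: X2)) := by
    simp only [bullet]
    rw [hfflen, hff, hro]
    rw [map_sqL_eq X1, map_sqL_eq X2]
    simp only [List.map_append, List.map_cons]
    rw [map_shift_dec hge1X1, map_shift_dec hge1X2, shift_dec_one t1 hge1t1,
      shift_dec_one t2 hge1t2]
    exact (graftForest_formula 1 t1.value t2.value (X1.map LTree.value) X1
      (X2.map LTree.value) X2 t1 t2 (by simp) (by simp)).symm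
  exact ⟨hffF, hfflen, hroF, hrolen, hfsq, hsq, hbul⟩

/- Shape of a length-one forest -/

lemma sum_nodes_one : ∀ A : List LTree, forestLen A = 1 →
    ∃ A1 t A2, A = A1 ++ t :: A2 ∧ t.numNodes = 1 ∧
      (∀ s ∈ A1, s.numNodes = 0) ∧ (∀ s ∈ A2, s.numNodes = 0)
  | [], h => by simp at h
  | t :: A, h => by
      simp only [forestLen_cons] at h
      rcases Nat.eq_zero_or_pos t.numNodes with h0 | hpos
      · obtain ⟨A1, s, A2, rfl, hs, ha1, ha2⟩ := sum_nodes_one A (by omega)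
        refine ⟨t :: A1, s, A2, rfl, hs, ?_, ha2⟩
        intro s' hs'
        rcases List.mem_cons.1 hs' with rfl | hs'
        · exact h0
        · exact ha1 s' hs'
      · exact ⟨[], t, A, rfl, by omega, by simp, forestLen_eq_zero (by omega)⟩

lemma shape_one (A : List LTree) (hA : IsLForest A) (hlA : forestLen A = 1) :
    ∃ (c1 : List ℕ) (a : ℕ) (b : ℕ) (c2 : List ℕ), A = c1.map LTree.leaf ++ .node 1 (.leaf a) (.leaf b) :: c2.map LTree.leaf := by
  obtain ⟨A1, t, A2, rfl, ht, h1, h2⟩ := sum_nodes_one A hlA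
  obtain ⟨j, s1, s2, rfl⟩ : ∃ j s1 s2, t = .node j s1 s2 := by
    cases t with
    | leaf x => simp [LTree.numNodes] at ht
    | node j s1 s2 => exact ⟨j, s1, s2, rfl⟩
  have hns : s1.numNodes = 0 ∧ s2.numNodes = 0 := by
    simp [LTree.numNodes] at ht; omega
  obtain ⟨a, rfl⟩ := numNodes_eq_zero s1 hns.1
  obtain ⟨b, rfl⟩ := numNodes_eq_zero s2 hns.2
  have hj : j = 1 := by
    have hperm := hA.2.1
    rw [hlA] at hperm
    have hmem : j ∈ forestLabels (A1 ++ LTree.node j (.leaf a) (.leaf b) :: A2) := by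
      simp [LTree.labels]
    have := hperm.mem_iff.1 hmem
    rw [List.mem_range'_1] at this
    omega
  subst hj
  exact ⟨A1.map LTree.value, a, b, A2.map LTree.value, by
    rw [← eq_map_leaf h1, ← eq_map_leaf h2]⟩

/- The case of a forest of length one -/

lemma firstFactor_self (X : List LTree) (hX : IsLForest X) (hl : forestLen X = 1) :
    firstFactor X = X := by
  obtain ⟨hinc, hperm, hfol⟩ := hX
  have hmem : 1 ∈ forestLabels X := hperm.mem_iff.2 (by rw [List.mem_range'_1]; omega)
  obtain ⟨X1, t1, t2, X2, rfl, h1⟩ := exists_split X hinc hmem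
  rw [firstFactor_eq X1 t1 t2 X2 h1]
  simp only [forestLen_append, forestLen_cons, LTree.numNodes] at hl
  have hn1 : t1.numNodes = 0 := by omega
  have hn2 : t2.numNodes = 0 := by omega
  obtain ⟨a, ha⟩ := numNodes_eq_zero t1 hn1
  obtain ⟨b, hb⟩ := numNodes_eq_zero t2 hn2
  rw [map_sqL_of_leaves (forestLen_eq_zero (by omega)),
    map_sqL_of_leaves (forestLen_eq_zero (by omega)), ha, hb]
  rfl

/- Recovering the factors from the product -/

lemma bullet_props (A Y : List LTree) (hA : IsLForest A) (hlA : forestLen A = 1)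
    (hY : IsLForest Y) (hfs : forestFoliage A = squash Y) :
    firstFactor (bullet A Y) = A ∧ restOf (bullet A Y) = Y ∧
    IsLForest (bullet A Y) ∧ forestLen (bullet A Y) = forestLen Y + 1 ∧
    squash (bullet A Y) = squash A := by
  obtain ⟨c1, a, b, c2, rfl⟩ := shape_one A hA hlA
  obtain ⟨hincY, hpermY, hfolY⟩ := hY
  have hfA : forestFoliage (c1.map LTree.leaf ++
      LTree.node 1 (.leaf a) (.leaf b) :: c2.map LTree.leaf) = c1 ++ a :: b :: c2 := by
    simp [LTree.foliage]
  rw [hfA] at hfs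
  -- decompose Y
  have hYlen : Y.length = c1.length + (2 + c2.length) := by
    have := congrArg List.length hfs
    simp [squash] at this
    omega
  obtain ⟨Y1, s1, s2, Y2, rfl, hY1len⟩ :
      ∃ Y1 s1 s2 Y2, Y = Y1 ++ s1 :: s2 :: Y2 ∧ Y1.length = c1.length := by
    have hd : (Y.drop c1.length).length = 2 + c2.length := by
      rw [List.length_drop]; omega
    rcases he : Y.drop c1.length with _ | ⟨s1, R'⟩
    · rw [he] at hd; simp at hd; omega
    rcases hR' : R' with _ | ⟨s2, Y2⟩
    · rw [he, hR'] at hd; simp at hd; omega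
    refine ⟨Y.take c1.length, s1, s2, Y2, ?_, by rw [List.length_take]; omega⟩
    rw [← hR', ← he, List.take_append_drop]
  -- identify the pieces
  have hfs' : c1 ++ a :: b :: c2
      = squash Y1 ++ s1.value :: s2.value :: squash Y2 := by
    rw [hfs]; simp
  have hsq1 : c1 = squash Y1 ∧ a :: b :: c2 = s1.value :: s2.value :: squash Y2 :=
    List.append_inj hfs' (by simp [squash, hY1len])
  have hc1 : c1 = squash Y1 := hsq1.1
  have ha : a = s1.value := by have := hsq1.2; simp at this; tauto
  have hb : b = s2.value := by have := hsq1.2; simp at this; tauto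
  have hc2 : c2 = squash Y2 := by have := hsq1.2; simp at this; tauto
  -- membership facts about Y
  have hge1 : ∀ t ∈ Y1 ++ s1 :: s2 :: Y2, ∀ j ∈ t.labels, 1 ≤ j := fun t ht j hj =>
    labels_gt t 0 (hincY t ht) j hj
  have h1shift : ∀ t ∈ Y1.map (LTree.shift 1), 1 ∉ t.labels := by
    intro t ht e
    obtain ⟨t', ht', rfl⟩ := List.mem_map.1 ht
    rw [labels_shift] at e
    obtain ⟨j, hj, hj1⟩ := List.mem_map.1 e
    have := hge1 t' (by simp [ht']) j hj
    omega
  -- compute the product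
  have hbul : bullet (c1.map LTree.leaf ++ LTree.node 1 (.leaf a) (.leaf b) :: c2.map LTree.leaf)
      (Y1 ++ s1 :: s2 :: Y2)
      = Y1.map (LTree.shift 1) ++
          LTree.node 1 (s1.shift 1) (s2.shift 1) :: Y2.map (LTree.shift 1) := by
    simp only [bullet]
    rw [hlA]
    simp only [List.map_append, List.map_cons]
    exact graftForest_formula 1 a b c1 (Y1.map (LTree.shift 1)) c2 (Y2.map (LTree.shift 1))
      (s1.shift 1) (s2.shift 1) (by simp [hY1len])
      (by simp [hc2, squash])
  rw [hbul]
  refine ⟨?_, ?_, ⟨?_, ?_, ?_⟩, ?_, ?_⟩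
  · -- firstFactor recovers A
    rw [firstFactor_eq _ _ _ _ h1shift]
    have e1 : (Y1.map (LTree.shift 1)).map sqL = c1.map LTree.leaf := by
      rw [hc1]
      induction Y1 with
      | nil => rfl
      | cons t r ih => simp_all [sqL, squash]
    have e2 : (Y2.map (LTree.shift 1)).map sqL = c2.map LTree.leaf := by
      rw [hc2]
      induction Y2 with
      | nil => rfl
      | cons t r ih => simp_all [sqL, squash]
    rw [e1, e2]
    simp [ha, hb]
  · -- restOf recovers Y
    rw [restOf_eq _ _ _ _ h1shift]
    rw [map_dec_shift, map_dec_shift, dec_shift_one, dec_shift_one]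
  · -- incrFrom
    intro t ht
    rcases List.mem_append.1 ht with ht | ht
    · obtain ⟨s, hs, rfl⟩ := List.mem_map.1 ht
      exact incrFrom_mono _ 1 0 (by omega) (incrFrom_shift 1 s 0 (hincY s (by simp [hs])))
    · rcases List.mem_cons.1 ht with rfl | ht
      · exact ⟨Nat.one_pos, incrFrom_shift 1 s1 0 (hincY s1 (by simp)),
          incrFrom_shift 1 s2 0 (hincY s2 (by simp))⟩
      · obtain ⟨s, hs, rfl⟩ := List.mem_map.1 ht
        exact incrFrom_mono _ 1 0 (by omega) (incrFrom_shift 1 s 0 (hincY s (by simp [hs])))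
  · -- labels
    have hlen : forestLen (Y1.map (LTree.shift 1) ++
        LTree.node 1 (s1.shift 1) (s2.shift 1) :: Y2.map (LTree.shift 1))
        = forestLen (Y1 ++ s1 :: s2 :: Y2) + 1 := by
      simp [forestLen_map_shift, LTree.numNodes]
      omega
    rw [hlen]
    have hp1 : (forestLabels (Y1 ++ s1 :: s2 :: Y2)).map (· + 1) |>.Perm
        (List.range' 2 (forestLen (Y1 ++ s1 :: s2 :: Y2))) := by
      have := hpermY.map (· + 1)
      rwa [range'_map_add] at this
    have key : forestLabels (Y1.map (LTree.shift 1) ++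
        LTree.node 1 (s1.shift 1) (s2.shift 1) :: Y2.map (LTree.shift 1))
        = (forestLabels Y1).map (· + 1) ++
            1 :: (s1.labels.map (· + 1) ++ (s2.labels.map (· + 1) ++
              (forestLabels Y2).map (· + 1))) := by
      simp [forestLabels_map_shift, labels_shift, LTree.labels]
    rw [key, List.range'_succ]
    refine List.perm_middle.trans (List.Perm.cons 1 ?_)
    refine (List.Perm.of_eq ?_).trans hp1
    simp
  · -- foliage positivity
    have heq : forestFoliage (Y1.map (LTree.shift 1) ++
        LTree.node 1 (s1.shift 1) (s2.shift 1) :: Y2.map (LTree.shift 1))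
        = forestFoliage (Y1 ++ s1 :: s2 :: Y2) := by
      simp [forestFoliage_map_shift, LTree.foliage]
    rw [heq]; exact hfolY
  · -- length
    simp [forestLen_map_shift, LTree.numNodes]
    omega
  · -- squash
    simp only [squash_append, squash_cons, squash_map_shift, squash_map_leaf,
      LTree.value, value_shift, hc1, hc2, ha, hb]

/- chainProd equations -/

lemma chainProd_singleton (A : List LTree) : chainProd [A] = A := rfl

lemma chainProd_cons (A B : List LTree) (F : List (List LTree)) :
    chainProd (A :: B :: F) = bullet A (chainProd (B :: F)) := rfl

/- Products of chains of length-one forests are forests -/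

lemma chain_forest : ∀ (F : List (List LTree)) (B : List LTree),
    (∀ A ∈ B :: F, IsLForest A ∧ forestLen A = 1) →
    List.Chain' (fun A C => forestFoliage A = squash C) (B :: F) →
    IsLForest (chainProd (B :: F)) ∧ forestLen (chainProd (B :: F)) = F.length + 1 ∧
      squash (chainProd (B :: F)) = squash B
  | [], B, hf, _ => by
      have h := hf B (by simp)
      exact ⟨h.1, by simpa [chainProd_singleton] using h.2, rfl⟩
  | C :: F, B, hf, hc => by
      have ih := chain_forest F C (fun A hA => hf A (List.mem_cons_of_mem _ hA))
        (List.isChain_cons_cons.1 hc).2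
      have hBC : forestFoliage B = squash C := (List.isChain_cons_cons.1 hc).1
      have hfs : forestFoliage B = squash (chainProd (C :: F)) := by rw [hBC, ← ih.2.2]
      have hB := hf B (by simp)
      obtain ⟨_, _, h3, h4, h5⟩ := bullet_props B (chainProd (C :: F)) hB.1 hB.2 ih.1 hfs
      rw [chainProd_cons]
      refine ⟨h3, ?_, h5⟩
      rw [h4, ih.2.1]
      simp

/- Existence of the canonical factorization -/

lemma exists_fact : ∀ l : ℕ, 1 ≤ l → ∀ X : List LTree, IsLForest X → forestLen X = l →
    (∀ A ∈ canF l X, IsLForest A ∧ forestLen A = 1) ∧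
    List.Chain' (fun A B => forestFoliage A = squash B) (canF l X) ∧
    X = chainProd (canF l X)
  | 0, h0, _, _, _ => by omega
  | 1, _, X, hX, hlen => by
      refine ⟨?_, ?_, ?_⟩
      · intro A hA
        rw [show canF 1 X = [firstFactor X] from rfl] at hA
        rcases List.mem_singleton.1 hA with rfl
        obtain ⟨hf1, hf2, _⟩ := split_props X hX (by omega)
        exact ⟨hf1, hf2⟩
      · rw [show canF 1 X = [firstFactor X] from rfl]
        exact List.isChain_singleton _
      · rw [show canF 1 X = [firstFactor X] from rfl, chainProd_singleton,
          firstFactor_self X hX hlen]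
  | (m + 2), _, X, hX, hlen => by
      obtain ⟨hf1, hf2, hr1, hr2, hfs, hsq, hbul⟩ := split_props X hX (by omega)
      have hrlen : forestLen (restOf X) = m + 1 := by omega
      obtain ⟨ihA, ihC, ihP⟩ := exists_fact (m + 1) (by omega) (restOf X) hr1 hrlen
      obtain ⟨_, _, _, _, _, hsq', _⟩ := split_props (restOf X) hr1 (by omega)
      refine ⟨?_, ?_, ?_⟩
      · intro A hA
        rw [show canF (m + 2) X = firstFactor X :: canF (m + 1) (restOf X) from rfl] at hA
        rcases List.mem_cons.1 hA with rfl | hA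
        · exact ⟨hf1, hf2⟩
        · exact ihA A hA
      · rw [show canF (m + 2) X = firstFactor X :: canF (m + 1) (restOf X) from rfl,
          show canF (m + 1) (restOf X)
            = firstFactor (restOf X) :: canF m (restOf (restOf X)) from rfl]
        refine List.isChain_cons_cons.2 ?_
        constructor
        · rw [hfs, ← hsq']
        · rw [← show canF (m + 1) (restOf X)
            = firstFactor (restOf X) :: canF m (restOf (restOf X)) from rfl]
          exact ihC
      · rw [show canF (m + 2) X = firstFactor X :: canF (m + 1) (restOf X) from rfl]
        have hcp : chainProd (firstFactor X :: canF (m + 1) (restOf X))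
            = bullet (firstFactor X) (chainProd (canF (m + 1) (restOf X))) := by
          rw [show canF (m + 1) (restOf X)
            = firstFactor (restOf X) :: canF m (restOf (restOf X)) from rfl]
          exact chainProd_cons _ _ _
        rw [hcp, ← ihP]
        exact hbul

/- Uniqueness of the factorization -/

lemma unique_fact : ∀ l : ℕ, 1 ≤ l → ∀ (X : List LTree) (F : List (List LTree)),
    IsLForest X → forestLen X = l → F.length = l →
    (∀ A ∈ F, IsLForest A ∧ forestLen A = 1) →
    List.Chain' (fun A B => forestFoliage A = squash B) F →
    X = chainProd F → F = canF l X
  | 0, h0, _, _, _, _, _, _, _, _ => by omega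
  | 1, _, X, F, hX, hlen, hFlen, _, _, hFprod => by
      obtain ⟨A, rfl⟩ : ∃ A, F = [A] := by
        rcases F with _ | ⟨A, _ | ⟨B, F'⟩⟩
        · simp at hFlen
        · exact ⟨A, rfl⟩
        · simp at hFlen
      have hXA : X = A := by rw [hFprod, chainProd_singleton]
      rw [show canF 1 X = [firstFactor X] from rfl, firstFactor_self X hX hlen, hXA]
  | (m + 2), _, X, F, hX, hlen, hFlen, hFfac, hFch, hFprod => by
      obtain ⟨A, B, F', rfl⟩ : ∃ A B F', F = A :: B :: F' := by
        rcases F with _ | ⟨A, _ | ⟨B, F'⟩⟩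
        · simp at hFlen
        · simp at hFlen
        · exact ⟨A, B, F', rfl⟩
      have hfacs' : ∀ C ∈ B :: F', IsLForest C ∧ forestLen C = 1 :=
        fun C hC => hFfac C (List.mem_cons_of_mem _ hC)
      have hch' := (List.isChain_cons_cons.1 hFch).2
      obtain ⟨hYf, hYlen, hYsq⟩ := chain_forest F' B hfacs' hch'
      have hAB : forestFoliage A = squash B := (List.isChain_cons_cons.1 hFch).1
      have hfs : forestFoliage A = squash (chainProd (B :: F')) := by rw [hAB, ← hYsq]
      have hA := hFfac A (by simp)
      have hXeq : X = bullet A (chainProd (B :: F')) := by rw [hFprod, chainProd_cons]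
      obtain ⟨hffA, hroY, _, _, _⟩ :=
        bullet_props A (chainProd (B :: F')) hA.1 hA.2 hYf hfs
      rw [← hXeq] at hffA hroY
      have hF'len : (B :: F').length = m + 1 := by simpa using hFlen
      have hYlen' : forestLen (chainProd (B :: F')) = m + 1 := by
        rw [hYlen]; simpa using hF'len
      have ih := unique_fact (m + 1) (by omega) (chainProd (B :: F')) (B :: F')
        hYf hYlen' hF'len hfacs' hch' rfl
      rw [show canF (m + 2) X = firstFactor X :: canF (m + 1) (restOf X) from rfl,
        hffA, hroY, ← ih]

end UFA

end UniqueFactorizationAux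

/-- **Unique factorization (Lemma `UniqueFactorization`).** Every labeled forest of
length at least one admits a unique factorization as a (compatible) product
`X₁ • X₂ • ⋯ • X_l` of labeled forests of length one. -/
theorem unique_factorization_of_labeled_forests
    (X : List LTree) (hX : IsLForest X) (hl : 1 ≤ forestLen X) :
    ∃! F : List (List LTree),
      F.length = forestLen X ∧
      (∀ A ∈ F, IsLForest A ∧ forestLen A = 1) ∧
      List.Chain' (fun A B => forestFoliage A = squash B) F ∧
      X = chainProd F := by
  refine ⟨UFA.canF (forestLen X) X, ?_, ?_⟩
  · obtain ⟨h1, h2, h3⟩ := UFA.exists_fact (forestLen X) hl X hX rfl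
    exact ⟨UFA.canF_length _ _, h1, h2, h3⟩
  · rintro F ⟨hFlen, hFfac, hFch, hFprod⟩
    exact UFA.unique_fact (forestLen X) hl X F hX rfl hFlen hFfac hFch hFprod
end

section
/- kℒ_n is a subalgebra of kL_n: for all labeled forests X, Y ∈ L_n, the product [X]•[Y] of their Pólya orbit sums is a k-linear combination of Pólya orbit sums [Z] with Z ∈ L_n. -/
set_option maxHeartbeats 1000000

/-! ## Auxiliary development for the subalgebra theorem -/

namespace PolyaAux
open List

/-- Number of leaves of a tree. -/
def numLeaves (t : LTree) : ℕ := t.foliage.length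

/-- Prune: cut off every maximal subtree whose root label exceeds `L`,
replacing it by a leaf carrying its value. -/
def prune (L : ℕ) : LTree → LTree
  | .leaf x => .leaf x
  | .node i t1 t2 =>
      if L < i then .leaf (LTree.node i t1 t2).value
      else .node i (prune L t1) (prune L t2)

/-- Extract: the list of maximal subtrees whose root label exceeds `L`
(leaves count as extracted subtrees). -/
def extr (L : ℕ) : LTree → List LTree
  | .leaf x => [.leaf x]
  | .node i t1 t2 =>
      if L < i then [.node i t1 t2] else extr L t1 ++ extr L t2

/-- Decrease all labels by `m`. -/
def unshift (m : ℕ) : LTree → LTree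
  | .leaf x => .leaf x
  | .node i t1 t2 => .node (i - m) (unshift m t1) (unshift m t2)

/-- A tree is high (w.r.t. `L`) if it is a leaf or its root label exceeds `L`. -/
def High (L : ℕ) : LTree → Prop
  | .leaf _ => True
  | .node i _ _ => L < i

lemma value_shift (m : ℕ) (t : LTree) : (t.shift m).value = t.value := by
  induction t with
  | leaf x => rfl
  | node i t1 t2 ih1 ih2 => simp [LTree.shift, LTree.value, ih1, ih2]

lemma foliage_shift (m : ℕ) (t : LTree) : (t.shift m).foliage = t.foliage := by
  induction t with
  | leaf x => rfl
  | node i t1 t2 ih1 ih2 => simp [LTree.shift, LTree.foliage, ih1, ih2]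

lemma labels_shift (m : ℕ) (t : LTree) :
    (t.shift m).labels = t.labels.map (· + m) := by
  induction t with
  | leaf x => rfl
  | node i t1 t2 ih1 ih2 => simp [LTree.shift, LTree.labels, ih1, ih2]

lemma unshift_shift (m : ℕ) (t : LTree) : unshift m (t.shift m) = t := by
  induction t with
  | leaf x => rfl
  | node i t1 t2 ih1 ih2 => simp [LTree.shift, unshift, ih1, ih2]

lemma value_eq_sum_foliage (t : LTree) : t.value = t.foliage.sum := by
  induction t with
  | leaf x => simp [LTree.value, LTree.foliage]
  | node i t1 t2 ih1 ih2 => simp [LTree.value, LTree.foliage, ih1, ih2]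

lemma numNodes_eq_length_labels (t : LTree) : t.numNodes = t.labels.length := by
  induction t with
  | leaf x => rfl
  | node i t1 t2 ih1 ih2 => simp [LTree.numNodes, LTree.labels, ih1, ih2]

lemma foliage_flatMap_extr (L : ℕ) (t : LTree) :
    t.foliage = (extr L t).flatMap LTree.foliage := by
  induction t with
  | leaf x => simp [extr, LTree.foliage]
  | node i t1 t2 ih1 ih2 =>
      by_cases h : L < i
      · simp [extr, h]
      · simp [extr, h, LTree.foliage, ih1, ih2]

lemma foliage_prune (L : ℕ) (t : LTree) :
    (prune L t).foliage = (extr L t).map LTree.value := by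
  induction t with
  | leaf x => simp [prune, extr, LTree.foliage, LTree.value]
  | node i t1 t2 ih1 ih2 =>
      by_cases h : L < i
      · simp [prune, extr, h, LTree.foliage]
      · simp [prune, extr, h, LTree.foliage, ih1, ih2]

lemma labels_perm_prune_extr (L : ℕ) (t : LTree) :
    t.labels.Perm ((prune L t).labels ++ (extr L t).flatMap LTree.labels) := by
  induction t with
  | leaf x => simp [prune, extr, LTree.labels]
  | node i t1 t2 ih1 ih2 =>
      by_cases h : L < i
      · simp [prune, extr, h, LTree.labels]
      · simp only [prune, extr, if_neg h, LTree.labels, List.flatMap_append]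
        refine List.Perm.cons i ?_
        calc t1.labels ++ t2.labels
            ~ ((prune L t1).labels ++ (extr L t1).flatMap LTree.labels) ++
              ((prune L t2).labels ++ (extr L t2).flatMap LTree.labels) :=
              ih1.append ih2
          _ ~ ((prune L t1).labels ++ (prune L t2).labels) ++
              ((extr L t1).flatMap LTree.labels ++ (extr L t2).flatMap LTree.labels) := by
              simp only [List.append_assoc]
              exact List.Perm.append_left _ (List.perm_append_comm_assoc _ _ _)

lemma graft_snd_mem : ∀ (t : LTree) (ys : List LTree) (y : LTree),
    y ∈ (t.graft ys).2 → y ∈ ys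
  | .leaf _, [], y => by simp [LTree.graft]
  | .leaf _, t :: ts, y => by
      simp only [LTree.graft]; exact fun h => List.mem_cons_of_mem _ h
  | .node i t1 t2, ys, y => by
    simp only [LTree.graft]
    intro h
    exact graft_snd_mem t1 ys y (graft_snd_mem t2 _ y h)

lemma graft_drop : ∀ (t : LTree) (ys : List LTree), numLeaves t ≤ ys.length →
    (t.graft ys).2 = ys.drop (numLeaves t)
  | .leaf x, [], h => by simp [numLeaves, LTree.foliage] at h
  | .leaf x, y :: ts, _ => by simp [LTree.graft, numLeaves, LTree.foliage]
  | .node i t1 t2, ys, h => by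
    have hlen : numLeaves (LTree.node i t1 t2) = numLeaves t1 + numLeaves t2 := by
      simp [numLeaves, LTree.foliage]
    have h1 : numLeaves t1 ≤ ys.length := by omega
    have e1 := graft_drop t1 ys h1
    have h2 : numLeaves t2 ≤ (ys.drop (numLeaves t1)).length := by
      simp [List.length_drop]; omega
    simp only [LTree.graft, e1]
    rw [graft_drop t2 _ h2, List.drop_drop, hlen, Nat.add_comm]

lemma graft_append_fst : ∀ (t : LTree) (ys r : List LTree), numLeaves t ≤ ys.length →
    (t.graft (ys ++ r)).1 = (t.graft ys).1
  | .leaf x, [], r, h => by simp [numLeaves, LTree.foliage] at h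
  | .leaf x, y :: ts, r, _ => by simp [LTree.graft]
  | .node i t1 t2, ys, r, h => by
    have hlen : numLeaves (LTree.node i t1 t2) = numLeaves t1 + numLeaves t2 := by
      simp [numLeaves, LTree.foliage]
    have h1 : numLeaves t1 ≤ ys.length := by omega
    have e1 := graft_drop t1 ys h1
    have e1' := graft_drop t1 (ys ++ r) (by simp; omega)
    have hd : (ys ++ r).drop (numLeaves t1) = ys.drop (numLeaves t1) ++ r := by
      rw [List.drop_append_of_le_length h1]
    have h2 : numLeaves t2 ≤ (ys.drop (numLeaves t1)).length := by
      simp [List.length_drop]; omega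
    simp only [LTree.graft, e1, e1', hd]
    rw [graft_append_fst t1 ys r h1, graft_append_fst t2 _ r h2]

lemma graft_exact (t : LTree) (ys r : List LTree) (h : ys.length = numLeaves t) :
    t.graft (ys ++ r) = ((t.graft ys).1, r) := by
  have h1 : numLeaves t ≤ ys.length := le_of_eq h.symm
  refine Prod.ext ?_ ?_
  · exact graft_append_fst t ys r h1
  · rw [graft_drop t _ (by simp; omega), List.drop_append_of_le_length h1,
      ← h, List.drop_length, List.nil_append]

lemma incrFrom_mono {p q : ℕ} (h : q ≤ p) : ∀ {t : LTree}, t.incrFrom p → t.incrFrom q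
  | .leaf _, _ => trivial
  | .node i t1 t2, ⟨h1, h2, h3⟩ => ⟨lt_of_le_of_lt h h1, h2, h3⟩

lemma incrFrom_shift (m : ℕ) : ∀ {p : ℕ} {t : LTree}, t.incrFrom p → (t.shift m).incrFrom (p + m)
  | _, .leaf _, _ => trivial
  | p, .node i t1 t2, ⟨h1, h2, h3⟩ =>
      ⟨by omega, incrFrom_shift m h2, incrFrom_shift m h3⟩

lemma incrFrom_graft (L : ℕ) : ∀ (t : LTree) (ys : List LTree) {p : ℕ},
    t.incrFrom p → p ≤ L → (∀ j ∈ t.labels, j ≤ L) → (∀ y ∈ ys, y.incrFrom L) →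
    ((t.graft ys).1).incrFrom p
  | .leaf x, [], p, _, _, _, _ => trivial
  | .leaf x, y :: ts, p, _, hpL, _, hys => by
      simp only [LTree.graft]
      exact incrFrom_mono hpL (hys y (List.mem_cons_self))
  | .node i t1 t2, ys, p, ⟨h1, h2, h3⟩, hpL, hlab, hys => by
      have hiL : i ≤ L := hlab i (by simp [LTree.labels])
      refine ⟨h1, ?_, ?_⟩
      · exact incrFrom_graft L t1 ys h2 hiL
          (fun j hj => hlab j (by simp [LTree.labels]; tauto)) hys
      · exact incrFrom_graft L t2 _ h3 hiL
          (fun j hj => hlab j (by simp [LTree.labels]; tauto))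
          (fun y hy => hys y (graft_snd_mem t1 ys y hy))

lemma tree_recon (L : ℕ) : ∀ (t : LTree) (ys : List LTree),
    (∀ j ∈ t.labels, j ≤ L) → (∀ y ∈ ys, High L y) →
    t.foliage = ys.map LTree.value →
    prune L (t.graft ys).1 = t ∧ extr L (t.graft ys).1 = ys
  | .leaf x, ys, _, hh, hf => by
      have : ∃ y, ys = [y] := by
        cases ys with
        | nil => simp [LTree.foliage] at hf
        | cons y ts =>
          cases ts with
          | nil => exact ⟨y, rfl⟩
          | cons z ts' => simp [LTree.foliage] at hf
      obtain ⟨y, rfl⟩ := this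
      have hv : y.value = x := by simp [LTree.foliage] at hf; omega
      simp only [LTree.graft]
      cases y with
      | leaf v =>
          simp [LTree.value] at hv
          simp [prune, extr, hv]
      | node j u1 u2 =>
          have hj : L < j := hh _ (List.mem_cons_self)
          simp [prune, extr, hj, hv]
  | .node i t1 t2, ys, hlab, hh, hf => by
      have hiL : ¬ L < i := by
        have := hlab i (by simp [LTree.labels]); omega
      have hf' : t1.foliage ++ t2.foliage = ys.map LTree.value := hf
      set n1 := numLeaves t1 with hn1
      have hlen1 : (ys.take n1).length = n1 := by
        rw [List.length_take]
        have : (ys.map LTree.value).length = t1.foliage.length + t2.foliage.length := by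
          rw [← hf']; simp
        simp at this
        simp [numLeaves, hn1]; omega
      have hys1 : (ys.take n1).map LTree.value = t1.foliage := by
        rw [List.map_take, ← hf']
        exact List.take_left' rfl
      have hys2 : (ys.drop n1).map LTree.value = t2.foliage := by
        rw [List.map_drop, ← hf']
        exact List.drop_left' rfl
      have hsplit : ys.take n1 ++ ys.drop n1 = ys := List.take_append_drop _ _
      have hle : n1 ≤ ys.length := by
        have h := List.length_take (i := n1) (l := ys)
        rw [hlen1] at h
        omega
      have e1 : (t1.graft ys).2 = ys.drop n1 := graft_drop t1 ys hle
      have e2 : (t1.graft ys).1 = (t1.graft (ys.take n1)).1 := by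
        conv_lhs => rw [← hsplit]
        exact graft_append_fst t1 _ _ (le_of_eq hlen1.symm)
      have ih1 := tree_recon L t1 (ys.take n1)
        (fun j hj => hlab j (by simp [LTree.labels]; tauto))
        (fun y hy => hh y (List.mem_of_mem_take hy)) hys1.symm
      have ih2 := tree_recon L t2 (ys.drop n1)
        (fun j hj => hlab j (by simp [LTree.labels]; tauto))
        (fun y hy => hh y (List.mem_of_mem_drop hy)) hys2.symm
      simp only [LTree.graft, e1, e2, prune, extr, if_neg hiL]
      rw [ih1.1, ih1.2, ih2.1, ih2.2]
      exact ⟨rfl, hsplit⟩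

lemma forest_recon (L : ℕ) : ∀ (X1 Y1 : List LTree),
    (∀ t ∈ X1, ∀ j ∈ t.labels, j ≤ L) →
    (∀ y ∈ Y1, ∀ j ∈ y.labels, 1 ≤ j) →
    (∀ t ∈ X1, t.incrFrom 0) → (∀ y ∈ Y1, y.incrFrom 0) →
    forestFoliage X1 = squash Y1 →
    (graftForest X1 (Y1.map (LTree.shift L))).map (prune L) = X1 ∧
    (graftForest X1 (Y1.map (LTree.shift L))).flatMap (extr L) = Y1.map (LTree.shift L) ∧
    (∀ z ∈ graftForest X1 (Y1.map (LTree.shift L)), ∀ rest,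
      (prune L z).graft (extr L z ++ rest) = (z, rest)) ∧
    (∀ z ∈ graftForest X1 (Y1.map (LTree.shift L)), z.incrFrom 0)
  | [], Y1 => by
    intro _ _ _ _ hf
    have : Y1 = [] := by
      have : squash Y1 = [] := by rw [← hf]; rfl
      simpa [squash] using this
    subst this
    simp [graftForest]
  | t :: ts, Y1 => by
    intro hlab hlabY hincr hincrY hf
    set ysh := Y1.map (LTree.shift L) with hysh
    have hmapval : ysh.map LTree.value = squash Y1 := by
      rw [hysh, List.map_map, squash]
      congr 1
      funext y
      exact value_shift L y
    have hf' : t.foliage ++ forestFoliage ts = ysh.map LTree.value := by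
      rw [hmapval, ← hf]; rfl
    set n1 := numLeaves t with hn1
    have hlen1 : (ysh.take n1).length = n1 := by
      rw [List.length_take]
      have : (ysh.map LTree.value).length = t.foliage.length + (forestFoliage ts).length := by
        rw [← hf']; simp
      simp at this
      simp [numLeaves, hn1]; omega
    have hys1 : (ysh.take n1).map LTree.value = t.foliage := by
      rw [List.map_take, ← hf']
      exact List.take_left' rfl
    have hys2 : (ysh.drop n1).map LTree.value = forestFoliage ts := by
      rw [List.map_drop, ← hf']
      exact List.drop_left' rfl
    have hle : n1 ≤ ysh.length := by
      have h := List.length_take (i := n1) (l := ysh)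
      rw [hlen1] at h
      omega
    have hhigh : ∀ y ∈ ysh, High L y := by
      intro y hy
      rw [hysh] at hy
      obtain ⟨y0, hy0, rfl⟩ := List.mem_map.1 hy
      cases y0 with
      | leaf v => trivial
      | node j u1 u2 =>
          have : 1 ≤ j := hlabY _ hy0 j (by simp [LTree.labels])
          show L < j + L
          omega
    have hincrysh : ∀ y ∈ ysh, y.incrFrom L := by
      intro y hy
      rw [hysh] at hy
      obtain ⟨y0, hy0, rfl⟩ := List.mem_map.1 hy
      have := incrFrom_shift L (hincrY y0 hy0)
      simpa using this
    have e1 : (t.graft ysh).2 = ysh.drop n1 := graft_drop t ysh hle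
    have e2 : (t.graft ysh).1 = (t.graft (ysh.take n1)).1 := by
      conv_lhs => rw [← List.take_append_drop n1 ysh]
      exact graft_append_fst t _ _ (le_of_eq hlen1.symm)
    have htr := tree_recon L t (ysh.take n1)
      (hlab t (List.mem_cons_self))
      (fun y hy => hhigh y (List.mem_of_mem_take hy)) hys1.symm
    have hdropmap : ysh.drop n1 = (Y1.drop n1).map (LTree.shift L) := by
      rw [hysh, List.map_drop]
    have ih := forest_recon L ts (Y1.drop n1)
      (fun u hu => hlab u (List.mem_cons_of_mem _ hu))
      (fun y hy => hlabY y (List.mem_of_mem_drop hy))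
      (fun u hu => hincr u (List.mem_cons_of_mem _ hu))
      (fun y hy => hincrY y (List.mem_of_mem_drop hy))
      (by
        rw [← hys2, hdropmap, List.map_map, squash]
        simp only [Function.comp_def, value_shift])
    rw [← hdropmap] at ih
    have hGF : graftForest (t :: ts) ysh = (t.graft ysh).1 :: graftForest ts (ysh.drop n1) := by
      simp only [graftForest, e1]
    refine ⟨?_, ?_, ?_, ?_⟩
    · rw [hGF]
      simp only [List.map_cons, ih.1, e2, htr.1]
    · rw [hGF]
      simp only [List.flatMap_cons, e2, htr.2]
      rw [ih.2.1, hdropmap, hysh, ← List.map_take, ← List.map_append,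
        List.take_append_drop]
    · rw [hGF]
      intro z hz rest
      rcases List.mem_cons.1 hz with rfl | hz'
      · rw [e2, htr.1, htr.2]
        rw [graft_exact t _ rest (by rw [hlen1]), ← e2]
      · exact ih.2.2.1 z hz' rest
    · rw [hGF]
      intro z hz
      rcases List.mem_cons.1 hz with rfl | hz'
      · exact incrFrom_graft L t ysh (hincr t (List.mem_cons_self)) (Nat.zero_le L)
          (hlab t (List.mem_cons_self)) hincrysh
      · exact ih.2.2.2 z hz'

lemma graftForest_good (L : ℕ) : ∀ (W rest : List LTree),
    (∀ z ∈ W, ∀ r, (prune L z).graft (extr L z ++ r) = (z, r)) →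
    graftForest (W.map (prune L)) (W.flatMap (extr L) ++ rest) = W
  | [], rest, _ => rfl
  | z :: W', rest, h => by
    have hz := h z (List.mem_cons_self) (W'.flatMap (extr L) ++ rest)
    simp only [List.map_cons, List.flatMap_cons, graftForest, List.append_assoc, hz]
    rw [graftForest_good L W' rest (fun u hu r => h u (List.mem_cons_of_mem _ hu) r)]

lemma flatMap_congr_perm {α β : Type} (l : List α) (f g : α → List β)
    (h : ∀ a ∈ l, (f a).Perm (g a)) : (l.flatMap f).Perm (l.flatMap g) := by
  induction l with
  | nil => simp
  | cons a l ih =>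
      simp only [List.flatMap_cons]
      exact (h a (List.mem_cons_self)).append
        (ih (fun b hb => h b (List.mem_cons_of_mem _ hb)))

lemma flatMap_append_perm {α β : Type} (l : List α) (f g : α → List β) :
    (l.flatMap fun a => f a ++ g a).Perm (l.flatMap f ++ l.flatMap g) := by
  induction l with
  | nil => simp
  | cons a l ih =>
      simp only [List.flatMap_cons, List.append_assoc]
      refine List.Perm.append_left _ ?_
      exact (List.Perm.append_left _ ih).trans (List.perm_append_comm_assoc _ _ _)

lemma flatMap_flatMap {α β γ : Type} (l : List α) (f : α → List β) (g : β → List γ) :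
    (l.flatMap f).flatMap g = l.flatMap fun a => (f a).flatMap g := by
  induction l with
  | nil => simp
  | cons a l ih => simp [ih]

lemma sum_flatMap {α : Type} (l : List α) (f : α → List ℕ) :
    (l.flatMap f).sum = (l.map fun a => (f a).sum).sum := by
  induction l with
  | nil => simp
  | cons a l ih => simp [ih]

lemma forestValue_eq_sum_foliage (W : List LTree) :
    forestValue W = (forestFoliage W).sum := by
  rw [forestValue, forestFoliage, sum_flatMap]
  congr 1
  exact List.map_congr_left fun t _ => value_eq_sum_foliage t

lemma forestLen_eq_length_labels (W : List LTree) :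
    forestLen W = (forestLabels W).length := by
  rw [forestLen, forestLabels, List.length_flatMap]
  congr 1
  exact List.map_congr_left fun t _ => numNodes_eq_length_labels t

lemma perm_forestLabels {A B : List LTree} (h : A.Perm B) :
    (forestLabels A).Perm (forestLabels B) := h.flatMap_right _

lemma perm_forestFoliage {A B : List LTree} (h : A.Perm B) :
    (forestFoliage A).Perm (forestFoliage B) := h.flatMap_right _

lemma perm_forestLen {A B : List LTree} (h : A.Perm B) : forestLen A = forestLen B :=
  (h.map LTree.numNodes).sum_eq

lemma perm_forestValue {A B : List LTree} (h : A.Perm B) : forestValue A = forestValue B :=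
  (h.map LTree.value).sum_eq

lemma perm_isLForest {A B : List LTree} (h : A.Perm B) (hA : IsLForest A) : IsLForest B := by
  obtain ⟨h1, h2, h3⟩ := hA
  refine ⟨fun t ht => h1 t (h.mem_iff.2 ht), ?_, fun x hx => h3 x ((perm_forestFoliage h).mem_iff.2 hx)⟩
  rw [← perm_forestLen h]
  exact (perm_forestLabels h).symm.trans h2

lemma bullet_spec (X1 Y1 : List LTree) (hX1 : IsLForest X1) (hY1 : IsLForest Y1)
    (hfs : forestFoliage X1 = squash Y1) :
    (bullet X1 Y1).map (prune (forestLen X1)) = X1 ∧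
    (bullet X1 Y1).flatMap (extr (forestLen X1)) = Y1.map (LTree.shift (forestLen X1)) ∧
    (∀ z ∈ bullet X1 Y1, ∀ rest,
      (prune (forestLen X1) z).graft (extr (forestLen X1) z ++ rest) = (z, rest)) ∧
    (∀ z ∈ bullet X1 Y1, z.incrFrom 0) := by
  have hlabX : ∀ t ∈ X1, ∀ j ∈ t.labels, j ≤ forestLen X1 := by
    intro t ht j hj
    have : j ∈ forestLabels X1 := List.mem_flatMap.2 ⟨t, ht, hj⟩
    have := hX1.2.1.mem_iff.1 this
    rw [List.mem_range'_1] at this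
    omega
  have hlabY : ∀ y ∈ Y1, ∀ j ∈ y.labels, 1 ≤ j := by
    intro y hy j hj
    have : j ∈ forestLabels Y1 := List.mem_flatMap.2 ⟨y, hy, hj⟩
    have := hY1.2.1.mem_iff.1 this
    rw [List.mem_range'_1] at this
    omega
  exact forest_recon (forestLen X1) X1 Y1 hlabX hlabY hX1.1 hY1.1 hfs

lemma bullet_good (X1 Y1 : List LTree) (hX1 : IsLForest X1) (hY1 : IsLForest Y1)
    (hfs : forestFoliage X1 = squash Y1) :
    IsLForest (bullet X1 Y1) ∧ forestValue (bullet X1 Y1) = forestValue Y1 := by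
  set L := forestLen X1 with hL
  set Z := bullet X1 Y1 with hZ
  obtain ⟨c1, c2, _c3, c4⟩ := bullet_spec X1 Y1 hX1 hY1 hfs
  have hfol : forestFoliage Z = forestFoliage Y1 := by
    rw [forestFoliage, show LTree.foliage = fun z => (extr L z).flatMap LTree.foliage from
      funext (foliage_flatMap_extr L), ← flatMap_flatMap, c2, List.flatMap_map]
    rw [forestFoliage]
    congr 1
    funext y
    exact foliage_shift L y
  have hlabperm : (forestLabels Z).Perm
      (forestLabels X1 ++ (forestLabels Y1).map (· + L)) := by
    have step1 : (forestLabels Z).Perm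
        (Z.flatMap (fun z => (prune L z).labels) ++
         Z.flatMap (fun z => (extr L z).flatMap LTree.labels)) := by
      refine (flatMap_congr_perm Z _ _ (fun z _ => labels_perm_prune_extr L z)).trans ?_
      exact flatMap_append_perm Z _ _
    have e1 : Z.flatMap (fun z => (prune L z).labels) = forestLabels X1 := by
      rw [← c1, forestLabels, List.flatMap_map]
    have e2 : Z.flatMap (fun z => (extr L z).flatMap LTree.labels)
        = (forestLabels Y1).map (· + L) := by
      rw [← flatMap_flatMap, c2, List.flatMap_map, forestLabels, List.map_flatMap]
      congr 1
      funext y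
      exact labels_shift L y
    rw [e1, e2] at step1
    exact step1
  have hYlen := hY1.2.1
  have hXlen := hX1.2.1
  have hrange : (forestLabels Z).Perm (List.range' 1 (forestLen Y1 + L)) := by
    refine hlabperm.trans ?_
    have : ((forestLabels Y1).map (· + L)).Perm ((List.range' 1 (forestLen Y1)).map (· + L)) :=
      hYlen.map _
    refine (hXlen.append this).trans ?_
    have hm : (List.range' 1 (forestLen Y1)).map (· + L) = List.range' (1 + L) (forestLen Y1) := by
      have h := List.map_add_range' (a := L) 1 (forestLen Y1) 1
      rw [show (1 + L) = (L + 1) by omega, ← h]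
      congr 1
      funext x
      omega
    rw [hm]
    have := List.range'_append (s := 1) (m := L) (n := forestLen Y1) (step := 1)
    simp only [one_mul] at this
    rw [this, Nat.add_comm]
  have hlenZ : forestLen Z = forestLen Y1 + L := by
    rw [forestLen_eq_length_labels, hrange.length_eq, List.length_range']
  refine ⟨⟨c4, ?_, ?_⟩, ?_⟩
  · rw [hlenZ]; exact hrange
  · intro x hx
    exact hY1.2.2 x ((hfol ▸ hx))
  · rw [forestValue_eq_sum_foliage, hfol, ← forestValue_eq_sum_foliage]

lemma shift_injective (L : ℕ) {B1 B2 : List LTree}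
    (h : B1.map (LTree.shift L) = B2.map (LTree.shift L)) : B1 = B2 := by
  have h2 := congrArg (List.map (unshift L)) h
  simpa [List.map_map, Function.comp_def, unshift_shift] using h2

lemma sum_single_apply (k : Type) [Semiring k] (s : Finset (List LTree)) (W : List LTree) :
    (∑ Z ∈ s, Finsupp.single Z (1 : k)) W = if W ∈ s then 1 else 0 := by
  classical
  rw [Finset.sum_apply']
  simp [Finsupp.single_apply]

lemma pol_apply (k : Type) [Semiring k] (X W : List LTree) :
    pol k X W = if W.Perm X then 1 else 0 := by
  rw [pol, sum_single_apply]
  congr 1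
  simp [List.mem_permutations]

lemma span_crit (k : Type) [Field k] (n : ℕ) : ∀ (N : ℕ) (f : (List LTree) →₀ k),
    f.support.card ≤ N →
    (∀ Z ∈ f.support, IsLForest Z ∧ forestValue Z = n) →
    (∀ Z W : List LTree, Z.Perm W → f Z = f W) →
    f ∈ LspanN k n := by
  intro N
  induction N with
  | zero =>
      intro f hcard _ _
      have : f = 0 := by
        rw [← Finsupp.support_eq_empty]
        exact Finset.card_eq_zero.1 (Nat.le_zero.1 hcard)
      rw [this]
      exact Submodule.zero_mem _
  | succ N ih =>
      intro f hcard hsupp hperm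
      rcases Finset.eq_empty_or_nonempty f.support with he | ⟨Z, hZ⟩
      · rw [Finsupp.support_eq_empty.1 he]
        exact Submodule.zero_mem _
      · set g : (List LTree) →₀ k := f - f Z • pol k Z with hg
        have hgapp : ∀ W, g W = f W - f Z * (if W.Perm Z then 1 else 0) := by
          intro W
          rw [hg, Finsupp.sub_apply, Finsupp.smul_apply, pol_apply, smul_eq_mul]
        have hfZ : ∀ W, W.Perm Z → f W = f Z := fun W hW => (hperm W Z hW)
        have hgsupp : g.support ⊆ f.support.erase Z := by
          intro W hW
          have hWne := Finsupp.mem_support_iff.1 hW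
          rw [hgapp] at hWne
          by_cases hp : W.Perm Z
          · rw [if_pos hp, mul_one, hfZ W hp, sub_self] at hWne
            exact absurd rfl hWne
          · rw [if_neg hp, mul_zero, sub_zero] at hWne
            refine Finset.mem_erase.2 ⟨?_, Finsupp.mem_support_iff.2 hWne⟩
            intro hWZ
            exact hp (hWZ ▸ List.Perm.refl W)
        have hcards : g.support.card ≤ N := by
          have h1 : (f.support.erase Z).card < f.support.card := Finset.card_erase_lt_of_mem hZ
          have h2 := Finset.card_le_card hgsupp
          omega
        have hgmem : g ∈ LspanN k n := by
          refine ih g hcards (fun W hW => hsupp W (Finset.mem_of_mem_erase (hgsupp hW))) ?_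
          intro W1 W2 hp
          rw [hgapp, hgapp, hperm W1 W2 hp]
          congr 1
          congr 1
          exact if_congr ⟨fun h => hp.symm.trans h, fun h => hp.trans h⟩ rfl rfl
        have hfeq : f = g + f Z • pol k Z := by rw [hg, sub_add_cancel]
        rw [hfeq]
        refine Submodule.add_mem _ hgmem (Submodule.smul_mem _ _ ?_)
        exact Submodule.subset_span ⟨Z, (hsupp Z hZ).1, (hsupp Z hZ).2, rfl⟩

lemma mulL_pol_pol (k : Type) [Field k] (X Y : List LTree) :
    mulL k (pol k X) (pol k Y) =
    ∑ A ∈ X.permutations.toFinset, ∑ B ∈ Y.permutations.toFinset,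
      (if forestFoliage A = squash B then Finsupp.single (bullet A B) (1 : k) else 0) := by
  classical
  have hinner : ∀ (A : List LTree) (a : k),
      ((pol k Y).sum fun B b => if forestFoliage A = squash B
          then Finsupp.single (bullet A B) (a * b) else 0)
      = ∑ B ∈ Y.permutations.toFinset,
          (if forestFoliage A = squash B then Finsupp.single (bullet A B) (a * 1) else 0) := by
    intro A a
    rw [pol, ← Finsupp.sum_finset_sum_index
      (fun B => by split <;> simp)
      (fun B b1 b2 => by split <;> simp [mul_add, Finsupp.single_add])]
    refine Finset.sum_congr rfl fun B _ => ?_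
    rw [Finsupp.sum_single_index (by split <;> simp)]
  have hF0 : ∀ A : List LTree,
      ((pol k Y).sum fun B b => if forestFoliage A = squash B
          then Finsupp.single (bullet A B) ((0 : k) * b) else 0) = 0 := by
    intro A
    rw [hinner A 0]
    simp
  have hFadd : ∀ (A : List LTree) (a1 a2 : k),
      ((pol k Y).sum fun B b => if forestFoliage A = squash B
          then Finsupp.single (bullet A B) ((a1 + a2) * b) else 0)
      = ((pol k Y).sum fun B b => if forestFoliage A = squash B
          then Finsupp.single (bullet A B) (a1 * b) else 0)
      + ((pol k Y).sum fun B b => if forestFoliage A = squash B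
          then Finsupp.single (bullet A B) (a2 * b) else 0) := by
    intro A a1 a2
    rw [hinner, hinner, hinner, ← Finset.sum_add_distrib]
    refine Finset.sum_congr rfl fun B _ => ?_
    split <;> simp [add_mul, Finsupp.single_add]
  rw [mulL]
  conv_lhs => rw [pol]
  rw [← Finsupp.sum_finset_sum_index hF0 hFadd]
  refine Finset.sum_congr rfl fun A _ => ?_
  rw [Finsupp.sum_single_index (hF0 A), hinner A 1]
  simp [one_mul]

end PolyaAux

/-- **`kℒₙ` is a subalgebra of `kLₙ` (Proposition `LSubalgebra`).** The product of two
Pólya orbit sums of labeled forests of value `n` is a `k`-linear combination of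
Pólya orbit sums of labeled forests of value `n`. -/
theorem polya_orbit_sums_subalgebra (k : Type) [Field k] [CharZero k] (n : ℕ)
    (X Y : List LTree) (hX : IsLForest X) (hXn : forestValue X = n)
    (hY : IsLForest Y) (hYn : forestValue Y = n) :
    mulL k (pol k X) (pol k Y) ∈ LspanN k n := by
  classical
  set S1 := X.permutations.toFinset with hS1
  set S2 := Y.permutations.toFinset with hS2
  have hmem1 : ∀ A : List LTree, A ∈ S1 ↔ A.Perm X := by
    intro A; rw [hS1, List.mem_toFinset, List.mem_permutations]
  have hmem2 : ∀ B : List LTree, B ∈ S2 ↔ B.Perm Y := by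
    intro B; rw [hS2, List.mem_toFinset, List.mem_permutations]
  set L := forestLen X with hL
  set P := (S1 ×ˢ S2).filter (fun p => forestFoliage p.1 = squash p.2) with hP
  have hPmem : ∀ p : List LTree × List LTree,
      p ∈ P ↔ (p.1.Perm X ∧ p.2.Perm Y ∧ forestFoliage p.1 = squash p.2) := by
    intro p
    rw [hP, Finset.mem_filter, Finset.mem_product, hmem1, hmem2]
    tauto
  have hinj : ∀ p ∈ P, ∀ q ∈ P, (fun p : List LTree × List LTree => bullet p.1 p.2) p
      = (fun p : List LTree × List LTree => bullet p.1 p.2) q → p = q := by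
    intro p hp q hq hbul
    simp only at hbul
    obtain ⟨hp1, hp2, hp3⟩ := (hPmem p).1 hp
    obtain ⟨hq1, hq2, hq3⟩ := (hPmem q).1 hq
    have hLp : forestLen p.1 = L := (PolyaAux.perm_forestLen hp1).trans hL.symm
    have hLq : forestLen q.1 = L := (PolyaAux.perm_forestLen hq1).trans hL.symm
    have sp := PolyaAux.bullet_spec p.1 p.2 (PolyaAux.perm_isLForest hp1.symm hX)
      (PolyaAux.perm_isLForest hp2.symm hY) hp3
    have sq := PolyaAux.bullet_spec q.1 q.2 (PolyaAux.perm_isLForest hq1.symm hX)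
      (PolyaAux.perm_isLForest hq2.symm hY) hq3
    rw [hLp] at sp
    rw [hLq] at sq
    have e1 : p.1 = q.1 := by rw [← sp.1, ← sq.1, hbul]
    have e2 : p.2 = q.2 := by
      refine PolyaAux.shift_injective L ?_
      rw [← sp.2.1, ← sq.2.1, hbul]
    exact Prod.ext e1 e2
  set Img := P.image (fun p => bullet p.1 p.2) with hImg
  have h2 : (∑ p ∈ P, Finsupp.single (bullet p.1 p.2) (1 : k))
      = ∑ A ∈ S1, ∑ B ∈ S2,
        (if forestFoliage A = squash B then Finsupp.single (bullet A B) (1 : k) else 0) := by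
    rw [hP, Finset.sum_filter, Finset.sum_product]
  have hstep : mulL k (pol k X) (pol k Y) = ∑ Z ∈ Img, Finsupp.single Z (1 : k) := by
    rw [PolyaAux.mulL_pol_pol, ← hS1, ← hS2, hImg, Finset.sum_image hinj]
    exact h2.symm
  have hclosed : ∀ W Z : List LTree, Z ∈ Img → W.Perm Z → W ∈ Img := by
    intro W Z hZ hWZ
    obtain ⟨p, hpP, rfl⟩ := Finset.mem_image.1 (hImg ▸ hZ)
    obtain ⟨hp1, hp2, hp3⟩ := (hPmem p).1 hpP
    have hLp : forestLen p.1 = L := (PolyaAux.perm_forestLen hp1).trans hL.symm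
    have sp := PolyaAux.bullet_spec p.1 p.2 (PolyaAux.perm_isLForest hp1.symm hX)
      (PolyaAux.perm_isLForest hp2.symm hY) hp3
    rw [hLp] at sp
    set A' := W.map (PolyaAux.prune L) with hA'
    set Bsh := W.flatMap (PolyaAux.extr L) with hBsh
    set B' := Bsh.map (PolyaAux.unshift L) with hB'
    have hA'p : A'.Perm p.1 := by rw [hA', ← sp.1]; exact hWZ.map _
    have hBshp : Bsh.Perm (p.2.map (LTree.shift L)) := by
      rw [hBsh, ← sp.2.1]; exact hWZ.flatMap_right _
    have hB'p : B'.Perm p.2 := by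
      rw [hB']
      refine (hBshp.map _).trans ?_
      rw [List.map_map]
      have : (PolyaAux.unshift L ∘ LTree.shift L) = id := by
        funext t; exact PolyaAux.unshift_shift L t
      rw [this, List.map_id]
    have hshB' : B'.map (LTree.shift L) = Bsh := by
      rw [hB', List.map_map]
      have hpt : ∀ w ∈ Bsh, (LTree.shift L ∘ PolyaAux.unshift L) w = w := by
        intro w hw
        obtain ⟨y, _, rfl⟩ := List.mem_map.1 (hBshp.subset hw)
        exact congrArg (LTree.shift L) (PolyaAux.unshift_shift L y)
      rw [List.map_congr_left hpt]
      simp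
    have hcond : forestFoliage A' = squash B' := by
      rw [hA', forestFoliage, List.flatMap_map]
      have e : (W.flatMap fun z => (PolyaAux.prune L z).foliage)
          = W.flatMap fun z => ((PolyaAux.extr L z).map LTree.value) := by
        congr 1
        funext z
        exact PolyaAux.foliage_prune L z
      rw [e, ← List.map_flatMap, ← hBsh, ← hshB', List.map_map, squash]
      congr 1
      funext y
      exact PolyaAux.value_shift L y
    have hLA' : forestLen A' = L := (PolyaAux.perm_forestLen (hA'p.trans hp1)).trans hL.symm
    have hbul : bullet A' B' = W := by
      have hg := PolyaAux.graftForest_good L W []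
        (fun z hz r => sp.2.2.1 z (hWZ.mem_iff.1 hz) r)
      rw [List.append_nil] at hg
      rw [bullet, hLA', hshB', hA', hBsh]
      exact hg
    rw [hImg]
    exact Finset.mem_image.2
      ⟨(A', B'), (hPmem _).2 ⟨hA'p.trans hp1, hB'p.trans hp2, hcond⟩, hbul⟩
  rw [hstep]
  refine PolyaAux.span_crit k n _ _ le_rfl ?_ ?_
  · intro Z hZs
    have hZI : Z ∈ Img := by
      by_contra hc
      have hne := Finsupp.mem_support_iff.1 hZs
      rw [PolyaAux.sum_single_apply, if_neg hc] at hne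
      exact hne rfl
    obtain ⟨p, hpP, rfl⟩ := Finset.mem_image.1 (hImg ▸ hZI)
    obtain ⟨hp1, hp2, hp3⟩ := (hPmem p).1 hpP
    have hg := PolyaAux.bullet_good p.1 p.2 (PolyaAux.perm_isLForest hp1.symm hX)
      (PolyaAux.perm_isLForest hp2.symm hY) hp3
    exact ⟨hg.1, hg.2.trans ((PolyaAux.perm_forestValue hp2).trans hYn)⟩
  · intro Z W hZW
    rw [PolyaAux.sum_single_apply, PolyaAux.sum_single_apply]
    by_cases hz : Z ∈ Img
    · rw [if_pos hz, if_pos (hclosed W Z hz hZW.symm)]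
    · rw [if_neg hz, if_neg (fun hw => hz (hclosed Z W hw hZW))]
end
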